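/- arXiv:1003.5157 — 4 statements merged into one kernel-verified Lean document; each statement's English description precedes it below -/
import Mathlib

section
/- Fix an integer x ≥ 1 and m ≥ 2. Let W be a finite set of points of ℙ^m with #W ≤ 2x + 1 that fails to impose independent conditions on degree-x forms, and let δ > 0 be the corank of the evaluation map from degree-x homogeneous polynomials in x_0,…,x_m to ℂ^W. Then there is a unique line ℓ ⊂ ℙ^m such that #(ℓ ∩ W) ≥ x + 2, and for this line #(W ∩ ℓ) = x + 1 + δ. -/
set_option maxHeartbeats 1000000
set_option synthInstance.maxHeartbeats 1000000


open MvPolynomial Module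

noncomputable section

/-- The evaluation map sending a degree-`x` form in `x_0, …, x_m` to its values at
the chosen representative vectors of the points of `W ⊂ ℙ^m`. -/
def evalMap (m x : ℕ) (W : Finset (Projectivization ℂ (Fin (m+1) → ℂ))) :
    (homogeneousSubmodule (Fin (m+1)) ℂ x) →ₗ[ℂ] (W → ℂ) :=
  (LinearMap.pi fun w : W =>
    (MvPolynomial.aeval ((w : Projectivization ℂ (Fin (m+1) → ℂ)).rep)).toLinearMap) ∘ₗ
    (homogeneousSubmodule (Fin (m+1)) ℂ x).subtype

namespace BBaux

attribute [local instance] Classical.propDecidable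

variable {m : ℕ}

lemma exists_functional {p : Submodule ℂ ((Fin (m+1) → ℂ))} {v : (Fin (m+1) → ℂ)} (hv : v ∉ p) :
    ∃ f : Module.Dual ℂ ((Fin (m+1) → ℂ)), f v ≠ 0 ∧ ∀ u ∈ p, f u = 0 := by
  obtain ⟨f, hf, hmap⟩ := p.exists_dual_map_eq_bot_of_notMem hv inferInstance
  refine ⟨f, hf, fun u hu => ?_⟩
  have hm : f u ∈ p.map f := Submodule.mem_map_of_mem hu
  rwa [hmap, Submodule.mem_bot] at hm

def polyD (m : ℕ) (f : Module.Dual ℂ ((Fin (m+1) → ℂ))) : MvPolynomial (Fin (m+1)) ℂ :=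
  ∑ i, C (f (Pi.single i 1)) * X i

lemma polyD_hom (f : Module.Dual ℂ ((Fin (m+1) → ℂ))) : (polyD m f).IsHomogeneous 1 :=
  IsHomogeneous.sum _ _ _ fun i _ => isHomogeneous_C_mul_X _ _

lemma aeval_polyD (f : Module.Dual ℂ ((Fin (m+1) → ℂ))) (v : (Fin (m+1) → ℂ)) : aeval v (polyD m f) = f v := by
  classical
  have hv : v = ∑ i, v i • (Pi.single i 1 : (Fin (m+1) → ℂ)) := by
    ext j
    rw [Finset.sum_apply]
    simp [Pi.single_apply]
  calc aeval v (polyD m f) = ∑ i, f (Pi.single i 1) * v i := by simp [polyD]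
  _ = f v := by
      conv_rhs => rw [hv]
      rw [map_sum]
      simp [mul_comm]

lemma rep_mem (p : (Projectivization ℂ (Fin (m+1) → ℂ))) : p.rep ∈ p.submodule := by
  rw [Projectivization.submodule_eq]
  exact Submodule.mem_span_singleton_self _

lemma rep_notMem {p q : (Projectivization ℂ (Fin (m+1) → ℂ))} (h : q ≠ p) : p.rep ∉ q.submodule := by
  intro hmem
  have h1 : p.submodule ≤ q.submodule := by
    rw [Projectivization.submodule_eq p]
    exact (Submodule.span_singleton_le_iff_mem _ _).2 hmem
  have h2 : p.submodule = q.submodule :=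
    Submodule.eq_of_le_of_finrank_le h1
      (by rw [Projectivization.finrank_submodule, Projectivization.finrank_submodule])
  exact h (Projectivization.submodule_injective h2.symm)

lemma finrank_line {p q : (Projectivization ℂ (Fin (m+1) → ℂ))} (h : p ≠ q) :
    finrank ℂ ↥(p.submodule ⊔ q.submodule) = 2 := by
  have hne : p.submodule ≠ q.submodule := fun he => h (Projectivization.submodule_injective he)
  have hlt : p.submodule ⊓ q.submodule < p.submodule := by
    rcases (inf_le_left : p.submodule ⊓ q.submodule ≤ p.submodule).lt_or_eq with h' | h'
    · exact h'
    · exfalso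
      apply hne
      have hle : p.submodule ≤ q.submodule := h' ▸ inf_le_right
      exact Submodule.eq_of_le_of_finrank_le hle
        (by rw [Projectivization.finrank_submodule, Projectivization.finrank_submodule])
  have h0 : finrank ℂ ↥(p.submodule ⊓ q.submodule) = 0 := by
    have := Submodule.finrank_lt_finrank_of_lt hlt
    rw [Projectivization.finrank_submodule] at this
    omega
  have hs := Submodule.finrank_sup_add_finrank_inf_eq p.submodule q.submodule
  rw [Projectivization.finrank_submodule, Projectivization.finrank_submodule, h0] at hs
  omega

lemma notMem_span_pair {p a b : (Projectivization ℂ (Fin (m+1) → ℂ))} (hpa : a ≠ p) (hpb : b ≠ p)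
    (hl : p.submodule ⊔ a.submodule ≠ p.submodule ⊔ b.submodule) :
    p.rep ∉ Submodule.span ℂ {a.rep, b.rep} := by
  intro hmem
  set U := Submodule.span ℂ ({a.rep, b.rep} : Set ((Fin (m+1) → ℂ))) with hUdef
  have hU : U = a.submodule ⊔ b.submodule := by
    rw [Projectivization.submodule_eq, Projectivization.submodule_eq, hUdef,
      ← Submodule.span_union, Set.singleton_union]
  have hUr : finrank ℂ ↥U ≤ 2 := by
    rw [hU]
    have hs := Submodule.finrank_sup_add_finrank_inf_eq a.submodule b.submodule
    rw [Projectivization.finrank_submodule, Projectivization.finrank_submodule] at hs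
    omega
  have hp : p.submodule ≤ U := by
    rw [Projectivization.submodule_eq]
    exact (Submodule.span_singleton_le_iff_mem _ _).2 hmem
  have ha : a.submodule ≤ U := hU ▸ le_sup_left
  have hb : b.submodule ≤ U := hU ▸ le_sup_right
  have h1 : p.submodule ⊔ a.submodule = U :=
    Submodule.eq_of_le_of_finrank_le (sup_le hp ha) (by rw [finrank_line (Ne.symm hpa)]; exact hUr)
  have h2 : p.submodule ⊔ b.submodule = U :=
    Submodule.eq_of_le_of_finrank_le (sup_le hp hb) (by rw [finrank_line (Ne.symm hpb)]; exact hUr)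
  exact hl (h1.trans h2.symm)

lemma single_mem_range {x : ℕ} {S : Finset ((Projectivization ℂ (Fin (m+1) → ℂ)))} {p : (Projectivization ℂ (Fin (m+1) → ℂ))} (hp : p ∈ S)
    {g : MvPolynomial (Fin (m+1)) ℂ} (hg : g.IsHomogeneous x)
    (h0 : ∀ q ∈ S, q ≠ p → aeval q.rep g = 0) :
    Pi.single (⟨p, hp⟩ : S) (aeval p.rep g) ∈ LinearMap.range (evalMap m x S) := by
  classical
  refine ⟨⟨g, (mem_homogeneousSubmodule _ _).2 hg⟩, ?_⟩
  funext q
  rcases eq_or_ne q ⟨p, hp⟩ with h | h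
  · subst h
    simp [evalMap]
  · have hq : (q : (Projectivization ℂ (Fin (m+1) → ℂ))) ≠ p := fun hq => h (Subtype.ext hq)
    simp [evalMap, h0 q q.2 hq, Pi.single_eq_of_ne h]

lemma range_eq_top_of_sep {x : ℕ} {S : Finset ((Projectivization ℂ (Fin (m+1) → ℂ)))}
    (h : ∀ p ∈ S, ∃ g : MvPolynomial (Fin (m+1)) ℂ, g.IsHomogeneous x ∧
      (∀ q ∈ S, q ≠ p → aeval q.rep g = 0) ∧ aeval p.rep g ≠ 0) :
    LinearMap.range (evalMap m x S) = ⊤ := by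
  classical
  rw [eq_top_iff, ← (Pi.basisFun ℂ S).span_eq, Submodule.span_le]
  rintro _ ⟨i, rfl⟩
  obtain ⟨g, hg, h0, hne⟩ := h i i.2
  have hmem := single_mem_range i.2 hg h0
  have hb : Pi.basisFun ℂ S i = (aeval (i : (Projectivization ℂ (Fin (m+1) → ℂ))).rep g)⁻¹ • (Pi.single i (aeval (i : (Projectivization ℂ (Fin (m+1) → ℂ))).rep g) : S → ℂ) := by
    rw [Pi.basisFun_apply, ← Pi.single_smul]
    congr 1
    exact (inv_mul_cancel₀ hne).symm
  rw [hb]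
  exact Submodule.smul_mem _ _ (by simpa using hmem)


lemma sep_main (p : (Projectivization ℂ (Fin (m+1) → ℂ))) (t : ℕ) :
    ∀ S : Finset ((Projectivization ℂ (Fin (m+1) → ℂ))), S.card ≤ 2 * t →
    (∀ ℓ₀ : Submodule ℂ ((Fin (m+1) → ℂ)), (S.filter fun s => p.submodule ⊔ s.submodule = ℓ₀).card ≤ t) →
    p ∉ S →
    ∃ g : MvPolynomial (Fin (m+1)) ℂ, g.IsHomogeneous t ∧
      (∀ s ∈ S, aeval s.rep g = 0) ∧ aeval p.rep g ≠ 0 := by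
  induction t with
  | zero =>
    intro S hcard _ _
    have hS : S = ∅ := Finset.card_eq_zero.1 (by omega)
    subst hS
    exact ⟨1, isHomogeneous_one _ _, by simp, by simp⟩
  | succ t IH =>
    intro S hcard hfib hpS
    rcases S.eq_empty_or_nonempty with rfl | hne
    · obtain ⟨f, hf, -⟩ := exists_functional (p := (⊥ : Submodule ℂ ((Fin (m+1) → ℂ)))) (v := p.rep)
        (by simp [Projectivization.rep_nonzero])
      refine ⟨(polyD m f) ^ (t+1), by simpa using (polyD_hom f).pow (t+1), by simp, ?_⟩
      simp only [map_pow, aeval_polyD]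
      exact pow_ne_zero _ hf
    · set c : (Projectivization ℂ (Fin (m+1) → ℂ)) → Submodule ℂ ((Fin (m+1) → ℂ)) := fun s => p.submodule ⊔ s.submodule with hc
      replace hfib : ∀ ℓ₀ : Submodule ℂ ((Fin (m+1) → ℂ)), (S.filter fun s => c s = ℓ₀).card ≤ t + 1 := hfib
      by_cases hone : ∀ s ∈ S, ∀ s' ∈ S, c s = c s'
      · obtain ⟨a, ha⟩ := hne
        have haS : S ⊆ S.filter fun s => c s = c a := fun s hs =>
          Finset.mem_filter.2 ⟨hs, hone s hs a ha⟩
        have hcardS : S.card ≤ t + 1 := le_trans (Finset.card_le_card haS) (hfib (c a))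
        have hap : a ≠ p := fun h => hpS (h ▸ ha)
        obtain ⟨f, hf, hf0⟩ := exists_functional (rep_notMem hap)
        have hce := Finset.card_erase_of_mem ha
        obtain ⟨g', hg', h0', hne'⟩ := IH (S.erase a) (by omega)
          (fun ℓ₀ => le_trans (Finset.card_le_card (Finset.filter_subset _ _)) (by omega))
          (fun h => hpS (Finset.mem_of_mem_erase h))
        refine ⟨g' * polyD m f, hg'.mul (polyD_hom f), ?_, ?_⟩
        · intro s hs
          rcases eq_or_ne s a with rfl | hsa
          · rw [map_mul, aeval_polyD, hf0 _ (rep_mem s), mul_zero]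
          · rw [map_mul, h0' s (Finset.mem_erase.2 ⟨hsa, hs⟩), zero_mul]
        · rw [map_mul, aeval_polyD]; exact mul_ne_zero hne' hf
      · push_neg at hone
        obtain ⟨a', ha', b', hb', hab'⟩ := hone
        obtain ⟨a, ha, hamax⟩ := S.exists_max_image (fun s => (S.filter fun u => c u = c s).card) hne
        have hbex : ∃ b ∈ S, c b ≠ c a := by
          by_cases h1 : c a' = c a
          · exact ⟨b', hb', fun h => hab' (h1.trans h.symm)⟩
          · exact ⟨a', ha', h1⟩
        obtain ⟨b, hb, hcb⟩ := hbex
        have hba : b ≠ a := fun h => hcb (by rw [h])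
        have hbea : b ∈ S.erase a := Finset.mem_erase.2 ⟨hba, hb⟩
        set S' := (S.erase a).erase b with hS'
        have hc1 : (S.erase a).card = S.card - 1 := Finset.card_erase_of_mem ha
        have hc2 : S'.card = (S.erase a).card - 1 := Finset.card_erase_of_mem hbea
        have hfib' : ∀ ℓ₀ : Submodule ℂ ((Fin (m+1) → ℂ)), ((S'.filter fun s => c s = ℓ₀).card ≤ t) := by
          intro ℓ₀
          have hsub : S' ⊆ S := fun s hs =>
            Finset.mem_of_mem_erase (Finset.mem_of_mem_erase hs)
          rcases eq_or_ne ℓ₀ (c a) with rfl | hla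
          · have hsub2 : (S'.filter fun s => c s = c a) ⊆ (S.filter fun s => c s = c a).erase a := by
              intro s hs
              obtain ⟨hs1, hs2⟩ := Finset.mem_filter.1 hs
              refine Finset.mem_erase.2 ⟨?_, Finset.mem_filter.2 ⟨hsub hs1, hs2⟩⟩
              exact (Finset.mem_erase.1 (Finset.mem_of_mem_erase hs1)).1
            have hmem : a ∈ S.filter fun s => c s = c a := Finset.mem_filter.2 ⟨ha, rfl⟩
            have h3 := Finset.card_erase_of_mem hmem
            have h4 := hfib (c a)
            have := Finset.card_le_card hsub2
            omega
          rcases eq_or_ne ℓ₀ (c b) with rfl | hlb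
          · have hsub2 : (S'.filter fun s => c s = c b) ⊆ (S.filter fun s => c s = c b).erase b := by
              intro s hs
              obtain ⟨hs1, hs2⟩ := Finset.mem_filter.1 hs
              refine Finset.mem_erase.2 ⟨?_, Finset.mem_filter.2 ⟨hsub hs1, hs2⟩⟩
              exact (Finset.mem_erase.1 hs1).1
            have hmem : b ∈ S.filter fun s => c s = c b := Finset.mem_filter.2 ⟨hb, rfl⟩
            have h3 := Finset.card_erase_of_mem hmem
            have h4 := hfib (c b)
            have := Finset.card_le_card hsub2
            omega
          · by_contra hgt
            push_neg at hgt
            have hsub2 : (S'.filter fun s => c s = ℓ₀) ⊆ S.filter fun s => c s = ℓ₀ :=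
              Finset.filter_subset_filter _ hsub
            have h1 : t + 1 ≤ (S.filter fun s => c s = ℓ₀).card :=
              le_trans hgt (Finset.card_le_card hsub2)
            obtain ⟨s₀, hs₀⟩ := Finset.card_pos.1 (show 0 < (S.filter fun s => c s = ℓ₀).card by omega)
            have hs₀S : s₀ ∈ S := (Finset.mem_filter.1 hs₀).1
            have hcs₀ : c s₀ = ℓ₀ := (Finset.mem_filter.1 hs₀).2
            have h2 : t + 1 ≤ (S.filter fun u => c u = c a).card := by
              have h5 := hamax s₀ hs₀S
              rw [hcs₀] at h5
              omega
            have hdisj : Disjoint (S.filter fun s => c s = ℓ₀) (S.filter fun u => c u = c a) := by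
              rw [Finset.disjoint_left]
              intro u hu1 hu2
              exact hla ((Finset.mem_filter.1 hu1).2.symm.trans (Finset.mem_filter.1 hu2).2)
            have hunion : ((S.filter fun s => c s = ℓ₀) ∪ (S.filter fun u => c u = c a)) ⊆ S :=
              Finset.union_subset (Finset.filter_subset _ _) (Finset.filter_subset _ _)
            have hcu := Finset.card_union_of_disjoint hdisj
            have heq : ((S.filter fun s => c s = ℓ₀) ∪ (S.filter fun u => c u = c a)) = S :=
              Finset.eq_of_subset_of_card_le hunion (by omega)
            have hbu : b ∈ (S.filter fun s => c s = ℓ₀) ∪ (S.filter fun u => c u = c a) := by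
              rw [heq]; exact hb
            rcases Finset.mem_union.1 hbu with h | h
            · exact hlb.symm (Finset.mem_filter.1 h).2
            · exact hcb (Finset.mem_filter.1 h).2
        have hap : a ≠ p := fun h => hpS (h ▸ ha)
        have hbp : b ≠ p := fun h => hpS (h ▸ hb)
        obtain ⟨f, hf, hf0⟩ := exists_functional (notMem_span_pair hap hbp
          (fun h => hcb (show c b = c a from h.symm)))
        obtain ⟨g', hg', h0', hne'⟩ := IH S' (by omega) hfib'
          (fun h => hpS (Finset.mem_of_mem_erase (Finset.mem_of_mem_erase h)))
        refine ⟨g' * polyD m f, hg'.mul (polyD_hom f), ?_, ?_⟩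
        · intro s hs
          rcases eq_or_ne s a with rfl | hsa
          · rw [map_mul, aeval_polyD, hf0 _ (Submodule.subset_span (Set.mem_insert _ _)), mul_zero]
          rcases eq_or_ne s b with rfl | hsb
          · rw [map_mul, aeval_polyD, hf0 _ (Submodule.subset_span (Set.mem_insert_of_mem _ rfl)), mul_zero]
          · rw [map_mul, h0' s (Finset.mem_erase.2 ⟨hsb, Finset.mem_erase.2 ⟨hsa, hs⟩⟩), zero_mul]
        · rw [map_mul, aeval_polyD]; exact mul_ne_zero hne' hf

lemma binary_mem_span {x : ℕ} (q : MvPolynomial (Fin 2) ℂ) (hq : q.IsHomogeneous x) :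
    q ∈ Submodule.span ℂ
      ((((Finset.range (x+1)).image fun i => (X 0 : MvPolynomial (Fin 2) ℂ) ^ i * X 1 ^ (x - i)) :
        Finset (MvPolynomial (Fin 2) ℂ)) : Set (MvPolynomial (Fin 2) ℂ)) := by
  classical
  have hsum : (∑ d ∈ q.support, monomial d (coeff d q)) ∈ Submodule.span ℂ
      ((((Finset.range (x+1)).image fun i => (X 0 : MvPolynomial (Fin 2) ℂ) ^ i * X 1 ^ (x - i)) :
        Finset (MvPolynomial (Fin 2) ℂ)) : Set (MvPolynomial (Fin 2) ℂ)) := by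
    refine Submodule.sum_mem _ fun d hd => ?_
    have hdeg : d 0 + d 1 = x := by
      have h1 := hq (Finsupp.mem_support_iff.1 hd)
      rw [Finsupp.weight_apply] at h1
      simp only [Finsupp.sum, smul_eq_mul, Pi.one_apply, mul_one] at h1
      rw [← h1]
      rw [Finset.sum_subset (Finset.subset_univ _)
        (fun i _ hi => Finsupp.notMem_support_iff.1 hi), Fin.sum_univ_two]
    have hmono : monomial d (coeff d q) =
        (coeff d q) • ((X 0 : MvPolynomial (Fin 2) ℂ) ^ d 0 * X 1 ^ d 1) := by
      rw [← C_mul', monomial_eq]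
      congr 1
      rw [Finsupp.prod_fintype _ _ (fun i => pow_zero _), Fin.prod_univ_two]
    rw [hmono]
    refine Submodule.smul_mem _ _ (Submodule.subset_span ?_)
    rw [Finset.coe_image, Set.mem_image]
    have h0 : d 0 ≤ x := by omega
    refine ⟨d 0, by simp only [Finset.coe_range, Set.mem_Iio]; omega, ?_⟩
    have h1 : x - d 0 = d 1 := by omega
    rw [h1]
  rwa [← q.as_sum] at hsum

lemma binary_rank_le (x : ℕ) (S : Finset ((Projectivization ℂ (Fin (m+1) → ℂ)))) (ℓ : Submodule ℂ ((Fin (m+1) → ℂ)))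
    (hl : finrank ℂ ℓ = 2) (hS : ∀ s ∈ S, s.submodule ≤ ℓ) :
    finrank ℂ (LinearMap.range (evalMap m x S)) ≤ x + 1 := by
  classical
  set bas : Basis (Fin 2) ℂ ℓ := finBasisOfFinrankEq ℂ ℓ hl with hbas
  set e : (Fin (m+1) → ℂ) := ((bas 0 : ℓ) : (Fin (m+1) → ℂ)) with he
  set f : (Fin (m+1) → ℂ) := ((bas 1 : ℓ) : (Fin (m+1) → ℂ)) with hf
  set Φ : MvPolynomial (Fin (m+1)) ℂ →ₐ[ℂ] MvPolynomial (Fin 2) ℂ :=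
    aeval (fun i => C (e i) * X 0 + C (f i) * X 1) with hPhi
  set gens : Finset (MvPolynomial (Fin 2) ℂ) :=
    (Finset.range (x+1)).image (fun i => (X 0 : MvPolynomial (Fin 2) ℂ) ^ i * X 1 ^ (x - i)) with hgens
  set N : Submodule ℂ (MvPolynomial (Fin 2) ℂ) := Submodule.span ℂ (gens : Set _) with hN
  have himg : ∀ P : homogeneousSubmodule (Fin (m+1)) ℂ x, Φ P.1 ∈ N := by
    intro P
    refine binary_mem_span _ ?_
    have hhom : (P : MvPolynomial (Fin (m+1)) ℂ).IsHomogeneous x :=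
      (mem_homogeneousSubmodule _ _).1 P.2
    have h2 := hhom.aeval (fun i => C (e i) * X 0 + C (f i) * (X 1 : MvPolynomial (Fin 2) ℂ))
      (fun i => (isHomogeneous_C_mul_X _ _).add (isHomogeneous_C_mul_X _ _))
    rw [hPhi]
    simpa only [one_mul] using h2
  have hrepmem : ∀ s : ↥S, (s : (Projectivization ℂ (Fin (m+1) → ℂ))).rep ∈ ℓ := fun s => hS s s.2 (rep_mem _)
  set vv : ↥S → Fin 2 → ℂ := fun s j => bas.repr ⟨(s : (Projectivization ℂ (Fin (m+1) → ℂ))).rep, hrepmem s⟩ j with hvv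
  have hkey : ∀ (s : ↥S) (P : MvPolynomial (Fin (m+1)) ℂ),
      aeval (vv s) (Φ P) = aeval (s : (Projectivization ℂ (Fin (m+1) → ℂ))).rep P := by
    intro s P
    rw [hPhi, comp_aeval_apply]
    have harg : (fun i => aeval (vv s) (C (e i) * X 0 + C (f i) * X 1)) = (s : (Projectivization ℂ (Fin (m+1) → ℂ))).rep := by
      funext i
      have hsum := bas.sum_repr ⟨(s : (Projectivization ℂ (Fin (m+1) → ℂ))).rep, hrepmem s⟩
      rw [Fin.sum_univ_two] at hsum
      have hval : vv s 0 • e + vv s 1 • f = (s : (Projectivization ℂ (Fin (m+1) → ℂ))).rep := by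
        have h9 := congrArg (Subtype.val) hsum
        rw [Submodule.coe_add, Submodule.coe_smul, Submodule.coe_smul] at h9
        exact h9
      have hco : vv s 0 * e i + vv s 1 * f i = (s : (Projectivization ℂ (Fin (m+1) → ℂ))).rep i := by
        have h9 := congrFun hval i
        simpa using h9
      simp only [map_add, map_mul, aeval_C, aeval_X, Algebra.algebraMap_self, RingHom.id_apply]
      rw [← hco]
      ring
    rw [harg]
  set Ψ : N →ₗ[ℂ] (↥S → ℂ) :=
    (LinearMap.pi fun s : ↥S => (aeval (vv s)).toLinearMap) ∘ₗ N.subtype with hPsi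
  set Φ' : (homogeneousSubmodule (Fin (m+1)) ℂ x) →ₗ[ℂ] N :=
    LinearMap.codRestrict N (Φ.toLinearMap ∘ₗ (homogeneousSubmodule (Fin (m+1)) ℂ x).subtype)
      (fun P => himg P) with hPhi'
  have heq : evalMap m x S = Ψ ∘ₗ Φ' := by
    refine LinearMap.ext fun P => funext fun s => ?_
    have : (Ψ ∘ₗ Φ') P s = aeval (vv s) (Φ P.1) := rfl
    rw [this, hkey]
    rfl
  have h1 : LinearMap.range (Ψ ∘ₗ Φ') ≤ LinearMap.range Ψ := LinearMap.range_comp_le_range _ _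
  have h2 : finrank ℂ (LinearMap.range (evalMap m x S)) ≤ finrank ℂ (LinearMap.range Ψ) := by
    rw [heq]
    exact Submodule.finrank_mono h1
  have h3 : finrank ℂ (LinearMap.range Ψ) ≤ finrank ℂ N := LinearMap.finrank_range_le _
  have h4 : finrank ℂ N ≤ gens.card := finrank_span_finset_le_card _
  have h5 : gens.card ≤ x + 1 := le_trans (Finset.card_image_le) (by simp)
  exact le_trans h2 (le_trans h3 (le_trans h4 h5))

/-- choose a functional for each point, killing it, nonvanishing at `p`. -/
def fsel (p : (Projectivization ℂ (Fin (m+1) → ℂ))) : (Projectivization ℂ (Fin (m+1) → ℂ)) → Module.Dual ℂ ((Fin (m+1) → ℂ)) := fun s =>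
  if h : s ≠ p then Classical.choose (exists_functional (rep_notMem h)) else 0

lemma fsel_ne {p s : (Projectivization ℂ (Fin (m+1) → ℂ))} (h : s ≠ p) : fsel p s p.rep ≠ 0 := by
  rw [fsel, dif_pos h]
  exact (Classical.choose_spec (exists_functional (rep_notMem h))).1

lemma fsel_zero {p s : (Projectivization ℂ (Fin (m+1) → ℂ))} (h : s ≠ p) : fsel p s s.rep = 0 := by
  rw [fsel, dif_pos h]
  exact (Classical.choose_spec (exists_functional (rep_notMem h))).2 _ (rep_mem s)

lemma rank_mono {x : ℕ} {T S : Finset ((Projectivization ℂ (Fin (m+1) → ℂ)))} (hTS : T ⊆ S) :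
    finrank ℂ (LinearMap.range (evalMap m x T)) ≤ finrank ℂ (LinearMap.range (evalMap m x S)) := by
  classical
  have hcomp : evalMap m x T =
      (LinearMap.funLeft ℂ ℂ (fun t : ↥T => (⟨t.1, hTS t.2⟩ : ↥S))) ∘ₗ evalMap m x S := rfl
  rw [hcomp, LinearMap.range_comp]
  exact Submodule.finrank_map_le _ _

lemma rank_small (x : ℕ) (T : Finset ((Projectivization ℂ (Fin (m+1) → ℂ)))) (hT : T.card = x + 1) :
    LinearMap.range (evalMap m x T) = ⊤ := by
  classical
  apply range_eq_top_of_sep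
  intro p hp
  refine ⟨∏ s ∈ T.erase p, polyD m (fsel p s), ?_, ?_, ?_⟩
  · have h1 := IsHomogeneous.prod (T.erase p) (fun s => polyD m (fsel p s)) (fun _ => 1)
      (fun s _ => polyD_hom _)
    have h2 : ∑ _s ∈ T.erase p, 1 = x := by
      rw [Finset.sum_const, Finset.card_erase_of_mem hp, hT]
      simp
    rwa [h2] at h1
  · intro q hq hqp
    rw [map_prod]
    refine Finset.prod_eq_zero (Finset.mem_erase.2 ⟨hqp, hq⟩) ?_
    rw [aeval_polyD]
    exact fsel_zero hqp
  · rw [map_prod]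
    refine Finset.prod_ne_zero_iff.2 fun s hs => ?_
    rw [aeval_polyD]
    exact fsel_ne (Finset.mem_erase.1 hs).1

lemma rank_count (x : ℕ) (W : Finset ((Projectivization ℂ (Fin (m+1) → ℂ)))) (ℓ : Submodule ℂ ((Fin (m+1) → ℂ)))
    (hl : finrank ℂ ℓ = 2)
    (hA : x + 2 ≤ (W.filter fun p => p.submodule ≤ ℓ).card)
    (hb : (W.filter fun p => ¬ p.submodule ≤ ℓ).card + 1 ≤ x) :
    finrank ℂ (LinearMap.range (evalMap m x W))
      = x + 1 + (W.filter fun p => ¬ p.submodule ≤ ℓ).card := by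
  classical
  set A : Finset ((Projectivization ℂ (Fin (m+1) → ℂ))) := W.filter (fun p => p.submodule ≤ ℓ) with hAdef
  set B : Finset ((Projectivization ℂ (Fin (m+1) → ℂ))) := W.filter (fun p => ¬ p.submodule ≤ ℓ) with hBdef
  -- rank of A is x+1
  have hrA : finrank ℂ (LinearMap.range (evalMap m x A)) = x + 1 := by
    have hle : finrank ℂ (LinearMap.range (evalMap m x A)) ≤ x + 1 :=
      binary_rank_le x A ℓ hl (fun s hs => (Finset.mem_filter.1 hs).2)
    obtain ⟨T, hTA, hTcard⟩ := Finset.exists_subset_card_eq (show x + 1 ≤ A.card by omega)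
    have htop := rank_small x T hTcard
    have h1 : finrank ℂ (LinearMap.range (evalMap m x T)) = x + 1 := by
      rw [htop, finrank_top, Module.finrank_fintype_fun_eq_card, Fintype.card_coe, hTcard]
    have h2 := rank_mono (x := x) hTA
    omega
  -- decomposition
  set ιA : ↥A → ↥W := fun a => ⟨a.1, Finset.mem_of_mem_filter _ a.2⟩ with hiA
  set ιB : ↥B → ↥W := fun b => ⟨b.1, Finset.mem_of_mem_filter _ b.2⟩ with hiB
  set R : Submodule ℂ (↥W → ℂ) := LinearMap.range (evalMap m x W) with hR
  set φ : R →ₗ[ℂ] (↥A → ℂ) := (LinearMap.funLeft ℂ ℂ ιA) ∘ₗ R.subtype with hphi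
  have hrange : LinearMap.range φ = LinearMap.range (evalMap m x A) := by
    have hcompA : evalMap m x A = (LinearMap.funLeft ℂ ℂ ιA) ∘ₗ evalMap m x W := rfl
    rw [hphi, hcompA, LinearMap.range_comp, LinearMap.range_comp, Submodule.range_subtype, hR]
  have hrn := LinearMap.finrank_range_add_finrank_ker φ
  rw [hrange, hrA] at hrn
  -- kernel has dimension B.card
  set K := LinearMap.ker φ with hK
  set ψ : K →ₗ[ℂ] (↥B → ℂ) := (LinearMap.funLeft ℂ ℂ ιB) ∘ₗ (R.subtype ∘ₗ K.subtype) with hpsi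
  have hinj : Function.Injective ψ := by
    intro k1 k2 heq
    apply Subtype.ext
    apply Subtype.ext
    funext w
    by_cases hw : (w : (Projectivization ℂ (Fin (m+1) → ℂ))).submodule ≤ ℓ
    · have e1 : ((k1 : ↥R) : ↥W → ℂ) (ιA ⟨w.1, Finset.mem_filter.2 ⟨w.2, hw⟩⟩) = 0 :=
        congrFun (k1.2 : φ (k1 : ↥R) = 0) _
      have e2 : ((k2 : ↥R) : ↥W → ℂ) (ιA ⟨w.1, Finset.mem_filter.2 ⟨w.2, hw⟩⟩) = 0 :=
        congrFun (k2.2 : φ (k2 : ↥R) = 0) _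
      have hiw : ιA ⟨w.1, Finset.mem_filter.2 ⟨w.2, hw⟩⟩ = w := Subtype.ext rfl
      rw [hiw] at e1 e2
      rw [e1, e2]
    · have e3 := congrFun heq ⟨w.1, Finset.mem_filter.2 ⟨w.2, hw⟩⟩
      have hiw : ιB ⟨w.1, Finset.mem_filter.2 ⟨w.2, hw⟩⟩ = w := Subtype.ext rfl
      have e4 : ((k1 : ↥R) : ↥W → ℂ) w = ((k2 : ↥R) : ↥W → ℂ) w := by
        rw [← hiw]
        exact e3
      exact e4
  have hsurj : LinearMap.range ψ = ⊤ := by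
    rw [eq_top_iff, ← (Pi.basisFun ℂ ↥B).span_eq, Submodule.span_le]
    rintro _ ⟨q, rfl⟩
    have hqB : (q : (Projectivization ℂ (Fin (m+1) → ℂ))) ∈ B := q.2
    have hqW : (q : (Projectivization ℂ (Fin (m+1) → ℂ))) ∈ W := Finset.mem_of_mem_filter _ q.2
    have hqnl : ¬ (q : (Projectivization ℂ (Fin (m+1) → ℂ))).submodule ≤ ℓ := (Finset.mem_filter.1 hqB).2
    have hqrep : (q : (Projectivization ℂ (Fin (m+1) → ℂ))).rep ∉ ℓ := by
      intro hmem
      apply hqnl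
      rw [Projectivization.submodule_eq]
      exact (Submodule.span_singleton_le_iff_mem _ _).2 hmem
    obtain ⟨fl, hfl1, hfl2⟩ := exists_functional hqrep
    have hcB : 1 ≤ B.card := Finset.card_pos.2 ⟨q.1, hqB⟩
    set g : MvPolynomial (Fin (m+1)) ℂ :=
      (∏ s ∈ B.erase q.1, polyD m (fsel q.1 s)) * (polyD m fl) ^ (x - B.card + 1) with hg
    have hghom : g.IsHomogeneous x := by
      have h1 := IsHomogeneous.prod (B.erase q.1) (fun s => polyD m (fsel q.1 s)) (fun _ => 1)
        (fun s _ => polyD_hom _)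
      have h2 : ∑ _s ∈ B.erase q.1, 1 = B.card - 1 := by
        rw [Finset.sum_const, Finset.card_erase_of_mem hqB]
        simp
      rw [h2] at h1
      have h3 := (polyD_hom fl).pow (x - B.card + 1)
      rw [one_mul] at h3
      have h4 := h1.mul h3
      have h5 : B.card - 1 + (x - B.card + 1) = x := by omega
      rwa [h5] at h4
    -- value of evalMap at g
    have hval0 : ∀ w : ↥W, (w : (Projectivization ℂ (Fin (m+1) → ℂ))) ≠ q.1 → aeval (w : (Projectivization ℂ (Fin (m+1) → ℂ))).rep g = 0 := by
      intro w hwq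
      rw [hg, map_mul]
      by_cases hw : (w : (Projectivization ℂ (Fin (m+1) → ℂ))).submodule ≤ ℓ
      · have : aeval (w : (Projectivization ℂ (Fin (m+1) → ℂ))).rep ((polyD m fl) ^ (x - B.card + 1)) = 0 := by
          rw [map_pow, aeval_polyD, hfl2 _ (hw (rep_mem _))]
          exact zero_pow (by omega)
        rw [this, mul_zero]
      · have hwB : (w : (Projectivization ℂ (Fin (m+1) → ℂ))) ∈ B.erase q.1 :=
          Finset.mem_erase.2 ⟨hwq, Finset.mem_filter.2 ⟨w.2, hw⟩⟩
        rw [map_prod, Finset.prod_eq_zero hwB (by rw [aeval_polyD]; exact fsel_zero hwq),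
          zero_mul]
    have hvalq : aeval (q : (Projectivization ℂ (Fin (m+1) → ℂ))).rep g ≠ 0 := by
      rw [hg, map_mul, map_prod, map_pow, aeval_polyD]
      refine mul_ne_zero (Finset.prod_ne_zero_iff.2 fun s hs => ?_) (pow_ne_zero _ hfl1)
      rw [aeval_polyD]
      exact fsel_ne (Finset.mem_erase.1 hs).1
    set c : ℂ := aeval (q : (Projectivization ℂ (Fin (m+1) → ℂ))).rep g with hc
    set v : ↥W → ℂ := evalMap m x W ⟨g, (mem_homogeneousSubmodule _ _).2 hghom⟩ with hv
    have hvsingle : v = Pi.single (⟨q.1, hqW⟩ : ↥W) c := by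
      funext w
      rcases eq_or_ne w ⟨q.1, hqW⟩ with rfl | hwq
      · rw [Pi.single_eq_same]
        rfl
      · have hne : (w : (Projectivization ℂ (Fin (m+1) → ℂ))) ≠ q.1 := fun h => hwq (Subtype.ext h)
        rw [Pi.single_eq_of_ne hwq]
        exact hval0 w hne
    have hvR : v ∈ R := ⟨⟨g, (mem_homogeneousSubmodule _ _).2 hghom⟩, rfl⟩
    have hker : φ ⟨v, hvR⟩ = 0 := by
      funext a
      have haA : (ιA a : ↥W).1 ∈ A := a.2
      have hne : (ιA a : ↥W) ≠ ⟨q.1, hqW⟩ := by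
        intro h
        have : (a : (Projectivization ℂ (Fin (m+1) → ℂ))) = q.1 := congrArg Subtype.val h
        have h1 := (Finset.mem_filter.1 (a.2 : (a : (Projectivization ℂ (Fin (m+1) → ℂ))) ∈ A)).2
        rw [this] at h1
        exact hqnl h1
      show v (ιA a) = 0
      rw [hvsingle, Pi.single_eq_of_ne hne]
    have hpsik : ψ ⟨⟨v, hvR⟩, hker⟩ = Pi.single q c := by
      funext b
      show v (ιB b) = (Pi.single q c : ↥B → ℂ) b
      rcases eq_or_ne b q with hbq | hbq
      · subst hbq
        have h1 : ιB b = ⟨b.1, hqW⟩ := Subtype.ext rfl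
        rw [h1, hvsingle, Pi.single_eq_same, Pi.single_eq_same]
      · have hne : (ιB b : ↥W) ≠ ⟨q.1, hqW⟩ := by
          intro h
          have hval := congrArg (fun z : ↥W => z.1) h
          exact hbq (Subtype.ext hval)
        rw [hvsingle, Pi.single_eq_of_ne hne, Pi.single_eq_of_ne hbq]
    have hsingle_mem : Pi.single q c ∈ LinearMap.range ψ := ⟨⟨⟨v, hvR⟩, hker⟩, hpsik⟩
    have hone : Pi.basisFun ℂ ↥B q = c⁻¹ • (Pi.single q c : ↥B → ℂ) := by
      rw [Pi.basisFun_apply, ← Pi.single_smul]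
      congr 1
      simp [inv_mul_cancel₀ hvalq]
    rw [hone]
    exact Submodule.smul_mem _ _ hsingle_mem
  have hKrank : finrank ℂ ↥K = B.card := by
    have hle9 := LinearMap.finrank_le_finrank_of_injective (R := ℂ) (M := ↥K)
      (M' := ↥B → ℂ) (f := ψ) hinj
    have hge9 := LinearMap.finrank_range_le (R := ℂ) (M := ↥K) (M' := ↥B → ℂ) ψ
    rw [hsurj, finrank_top] at hge9
    rw [Module.finrank_fintype_fun_eq_card, Fintype.card_coe] at hle9 hge9
    omega
  rw [hKrank] at hrn
  rw [hR] at hrn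
  exact hrn.symm

end BBaux

open BBaux in
/-- **Lemma 2 of Ballico–Bernardi** (reduced case).  Let `W ⊂ ℙ^m`, `m ≥ 2`, be a
finite set of at most `2x + 1` points failing to impose independent conditions on
degree-`x` forms with corank `δ > 0`.  Then there is a unique line `ℓ ⊂ ℙ^m`
with `#(ℓ ∩ W) ≥ x + 2`, and for it `#(W ∩ ℓ) = x + 1 + δ`. -/
theorem line_from_failing_conditions (m x : ℕ) (hm : 2 ≤ m) (hx : 1 ≤ x)
    (W : Finset (Projectivization ℂ (Fin (m+1) → ℂ))) (hW : W.card ≤ 2 * x + 1)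
    (δ : ℕ) (hδpos : 0 < δ)
    (hδ : finrank ℂ (LinearMap.range (evalMap m x W)) + δ = W.card) :
    ∃ ℓ : Submodule ℂ (Fin (m+1) → ℂ), finrank ℂ ℓ = 2 ∧
      x + 2 ≤ ((W : Set (Projectivization ℂ (Fin (m+1) → ℂ))) ∩
        {p | p.submodule ≤ ℓ}).ncard ∧
      ((W : Set (Projectivization ℂ (Fin (m+1) → ℂ))) ∩
        {p | p.submodule ≤ ℓ}).ncard = x + 1 + δ ∧
      ∀ ℓ' : Submodule ℂ (Fin (m+1) → ℂ), finrank ℂ ℓ' = 2 →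
        x + 2 ≤ ((W : Set (Projectivization ℂ (Fin (m+1) → ℂ))) ∩
          {p | p.submodule ≤ ℓ'}).ncard → ℓ' = ℓ := by
  classical
  have hset : ∀ L : Submodule ℂ ((Fin (m+1) → ℂ)),
      ((W : Set ((Projectivization ℂ (Fin (m+1) → ℂ)))) ∩ {p | p.submodule ≤ L}).ncard
        = (W.filter fun p => p.submodule ≤ L).card := by
    intro L
    rw [← Set.ncard_coe_finset]
    congr 1
    ext p
    simp only [Set.mem_inter_iff, Finset.coe_filter, Set.mem_setOf_eq, Finset.mem_coe]
  have hex : ∃ ℓ : Submodule ℂ ((Fin (m+1) → ℂ)), finrank ℂ ℓ = 2 ∧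
      x + 2 ≤ (W.filter fun p => p.submodule ≤ ℓ).card := by
    by_contra hno
    push_neg at hno
    have htop : LinearMap.range (evalMap m x W) = ⊤ := by
      apply range_eq_top_of_sep
      intro p hp
      have hep := Finset.card_erase_of_mem hp
      have hfib : ∀ ℓ₀ : Submodule ℂ ((Fin (m+1) → ℂ)),
          ((W.erase p).filter fun s => p.submodule ⊔ s.submodule = ℓ₀).card ≤ x := by
        intro ℓ₀
        rcases Finset.eq_empty_or_nonempty
            ((W.erase p).filter fun s => p.submodule ⊔ s.submodule = ℓ₀) with he | hne
        · rw [he]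
          simp
        · obtain ⟨s₀, hs₀⟩ := hne
          obtain ⟨hs₀e, hs₀l⟩ := Finset.mem_filter.1 hs₀
          have hs₀p : s₀ ≠ p := (Finset.mem_erase.1 hs₀e).1
          have hl₀ : finrank ℂ ℓ₀ = 2 := by
            rw [← hs₀l]
            exact finrank_line (Ne.symm hs₀p)
          have hlt := hno ℓ₀ hl₀
          have hsub : ((W.erase p).filter fun s => p.submodule ⊔ s.submodule = ℓ₀) ⊆
              (W.filter fun q => q.submodule ≤ ℓ₀).erase p := by
            intro s hs
            obtain ⟨hs1, hs2⟩ := Finset.mem_filter.1 hs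
            refine Finset.mem_erase.2 ⟨(Finset.mem_erase.1 hs1).1,
              Finset.mem_filter.2 ⟨Finset.mem_of_mem_erase hs1, ?_⟩⟩
            rw [← hs2]
            exact le_sup_right
          have hpm : p ∈ W.filter fun q => q.submodule ≤ ℓ₀ :=
            Finset.mem_filter.2 ⟨hp, by rw [← hs₀l]; exact le_sup_left⟩
          have h1 := Finset.card_le_card hsub
          have h2 := Finset.card_erase_of_mem hpm
          omega
      obtain ⟨g, hg, h0, hne⟩ := sep_main p x (W.erase p) (by omega) hfib
        (Finset.notMem_erase _ _)
      exact ⟨g, hg, fun q hq hqp => h0 q (Finset.mem_erase.2 ⟨hqp, hq⟩), hne⟩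
    rw [htop, finrank_top, Module.finrank_fintype_fun_eq_card, Fintype.card_coe] at hδ
    omega
  obtain ⟨ℓ, hl2, hAc⟩ := hex
  have hpart : (W.filter fun p => p.submodule ≤ ℓ).card
      + (W.filter fun p => ¬ p.submodule ≤ ℓ).card = W.card := by
    simpa using Finset.card_filter_add_card_filter_not
      (s := W) (p := fun p => p.submodule ≤ ℓ)
  have hrk := rank_count (m := m) x W ℓ hl2 (by convert hAc using 2)
    (by have h9 : (W.filter fun p => ¬ p.submodule ≤ ℓ).card + 1 ≤ x := by omega
        convert h9 using 2)
  rw [hrk] at hδ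
  rw [show (Finset.filter (fun p => ¬ Projectivization.submodule p ≤ ℓ) W) =
    (Finset.filter (fun p => ¬ p.submodule ≤ ℓ) W) from rfl] at hδ
  refine ⟨ℓ, hl2, ?_, ?_, ?_⟩
  · rw [hset ℓ]
    omega
  · rw [hset ℓ]
    omega
  · intro ℓ' hl2' hcard'
    rw [hset ℓ'] at hcard'
    by_contra hne'
    have hint : ((W.filter fun p => p.submodule ≤ ℓ) ∩
        (W.filter fun p => p.submodule ≤ ℓ')).card ≤ 1 := by
      refine Finset.card_le_one.2 fun p hp q hq => ?_
      have hpl := Finset.mem_filter.1 (Finset.mem_of_mem_inter_left hp)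
      have hpl' := Finset.mem_filter.1 (Finset.mem_of_mem_inter_right hp)
      have hql := Finset.mem_filter.1 (Finset.mem_of_mem_inter_left hq)
      have hql' := Finset.mem_filter.1 (Finset.mem_of_mem_inter_right hq)
      have hll : ℓ ⊓ ℓ' ≠ ℓ := by
        intro heq
        have hle : ℓ ≤ ℓ' := heq ▸ inf_le_right
        exact hne' (Submodule.eq_of_le_of_finrank_le hle (by omega)).symm
      have hfr : finrank ℂ ↥(ℓ ⊓ ℓ') < 2 := by
        have := Submodule.finrank_lt_finrank_of_lt (lt_of_le_of_ne inf_le_left hll)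
        omega
      have hp2 : p.submodule = ℓ ⊓ ℓ' := by
        refine Submodule.eq_of_le_of_finrank_le (le_inf hpl.2 hpl'.2) ?_
        rw [Projectivization.finrank_submodule]
        omega
      have hq2 : q.submodule = ℓ ⊓ ℓ' := by
        refine Submodule.eq_of_le_of_finrank_le (le_inf hql.2 hql'.2) ?_
        rw [Projectivization.finrank_submodule]
        omega
      exact Projectivization.submodule_injective (hp2.trans hq2.symm)
    have hun := Finset.card_union_add_card_inter (W.filter fun p => p.submodule ≤ ℓ)
      (W.filter fun p => p.submodule ≤ ℓ')
    have hsubW : ((W.filter fun p => p.submodule ≤ ℓ) ∪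
        (W.filter fun p => p.submodule ≤ ℓ')).card ≤ W.card :=
      Finset.card_le_card (Finset.union_subset (Finset.filter_subset _ _)
        (Finset.filter_subset _ _))
    omega

end
end

section
/- Fix an integer x ≥ 1. Let W be a finite set of points of ℙ^2 and ℓ ⊂ ℙ^2 a line such that #(W ∩ ℓ) ≥ x + 1 and #(W ∖ ℓ) ≤ x. Then the corank of the evaluation map from degree-x homogeneous polynomials in x_0, x_1, x_2 to ℂ^W equals #(W ∩ ℓ) − x − 1. -/
open MvPolynomial Module

noncomputable section

noncomputable section

/-- A linear functional as a degree-1 polynomial. -/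
def linPoly {n : ℕ} (φ : Module.Dual ℂ (Fin n → ℂ)) : MvPolynomial (Fin n) ℂ :=
  ∑ i, C (φ (Pi.single i 1)) * X i

lemma linPoly_isHomogeneous {n : ℕ} (φ : Module.Dual ℂ (Fin n → ℂ)) :
    (linPoly φ).IsHomogeneous 1 :=
  IsHomogeneous.sum _ _ _ fun i _ => isHomogeneous_C_mul_X _ i

lemma aeval_linPoly {n : ℕ} (φ : Module.Dual ℂ (Fin n → ℂ)) (v : Fin n → ℂ) :
    aeval v (linPoly φ) = φ v := by
  have hv : v = ∑ i, Pi.single i (v i) := (Finset.univ_sum_single v).symm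
  rw [linPoly, map_sum]
  conv_rhs => rw [hv, map_sum]
  refine Finset.sum_congr rfl fun i _ => ?_
  have : Pi.single i (v i) = v i • (Pi.single i (1 : ℂ) : Fin n → ℂ) := by
    rw [← Pi.single_smul, smul_eq_mul, mul_one]
  rw [this, map_smul]
  simp [mul_comm]

/-- Separating functional. -/
lemma exists_dual_vanishing {n : ℕ} (p : Submodule ℂ (Fin n → ℂ)) (v : Fin n → ℂ)
    (hv : v ∉ p) : ∃ φ : Module.Dual ℂ (Fin n → ℂ), φ v ≠ 0 ∧ ∀ w ∈ p, φ w = 0 := by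
  obtain ⟨f, hf, hf'⟩ := p.exists_dual_map_eq_bot_of_notMem hv inferInstance
  exact ⟨f, hf, fun w hw => by
    have : f w ∈ p.map f := Submodule.mem_map_of_mem hw
    rwa [hf', Submodule.mem_bot] at this⟩

lemma rep_nmem_submodule {n : ℕ} {p q : Projectivization ℂ (Fin n → ℂ)} (h : p ≠ q) :
    q.rep ∉ p.submodule := by
  intro hmem
  apply h
  apply Projectivization.submodule_injective
  have hle : q.submodule ≤ p.submodule := by
    rw [Projectivization.submodule_eq q, Submodule.span_singleton_le_iff_mem]
    exact hmem
  exact (Submodule.eq_of_le_of_finrank_eq hle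
    (by rw [Projectivization.finrank_submodule, Projectivization.finrank_submodule])).symm

lemma submodule_le_iff_rep_mem {n : ℕ} (p : Projectivization ℂ (Fin n → ℂ))
    (ℓ : Submodule ℂ (Fin n → ℂ)) : p.submodule ≤ ℓ ↔ p.rep ∈ ℓ := by
  rw [Projectivization.submodule_eq, Submodule.span_singleton_le_iff_mem]

lemma finrank_submodule_prod {R M N : Type*} [Field R] [AddCommGroup M] [Module R M]
    [AddCommGroup N] [Module R N] [FiniteDimensional R M] [FiniteDimensional R N]
    (p : Submodule R M) (q : Submodule R N) :
    finrank R (p.prod q) = finrank R p + finrank R q := by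
  let e : ↥(p.prod q) ≃ₗ[R] ↥p × ↥q :=
    { toFun := fun x => (⟨x.1.1, x.2.1⟩, ⟨x.1.2, x.2.2⟩)
      invFun := fun y => ⟨(y.1.1, y.2.1), ⟨y.1.2, y.2.2⟩⟩
      map_add' := fun _ _ => rfl
      map_smul' := fun _ _ => rfl
      left_inv := fun _ => rfl
      right_inv := fun _ => rfl }
  rw [e.finrank_eq, Module.finrank_prod]

lemma finrank_homog2_le (x : ℕ) :
    ∃ c : (homogeneousSubmodule (Fin 2) ℂ x) →ₗ[ℂ] (Fin (x+1) → ℂ), Function.Injective c := by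
  refine ⟨LinearMap.pi fun i => (lcoeff ℂ (Finsupp.single 0 (x - (i:ℕ)) + Finsupp.single 1 (i:ℕ)))
      ∘ₗ (homogeneousSubmodule (Fin 2) ℂ x).subtype, ?_⟩
  rw [← LinearMap.ker_eq_bot, eq_bot_iff]
  rintro ⟨P, hP⟩ h0
  rw [LinearMap.mem_ker] at h0
  rw [Submodule.mem_bot]
  refine Subtype.ext ?_
  show P = 0
  refine MvPolynomial.ext _ _ fun d => ?_
  rw [coeff_zero]
  have hdeg : d.degree = d 0 + d 1 := by
    rw [Finsupp.degree_apply, Finset.sum_subset (Finset.subset_univ d.support)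
      (fun i _ hi => Finsupp.notMem_support_iff.mp hi), Fin.sum_univ_two]
  by_cases hd : d 0 + d 1 = x
  · have hd1 : d 1 ≤ x := by omega
    have hde : d = Finsupp.single 0 (x - d 1) + Finsupp.single 1 (d 1) := by
      ext j
      fin_cases j <;> simp [Finsupp.single_apply] <;> omega
    have := congrFun h0 ⟨d 1, by omega⟩
    simp only [LinearMap.pi_apply, LinearMap.comp_apply, Submodule.coe_subtype,
      lcoeff_apply, Pi.zero_apply] at this
    rw [hde]
    exact this
  · exact ((mem_homogeneousSubmodule _ _).mp hP).coeff_eq_zero (by omega)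



lemma rank_eval_on_line_le (x : ℕ) (ℓ : Submodule ℂ (Fin (2+1) → ℂ))
    (hℓ : finrank ℂ ℓ = 2) (L : Finset (Projectivization ℂ (Fin (2+1) → ℂ)))
    (hL : ∀ p ∈ L, p.submodule ≤ ℓ) :
    finrank ℂ (LinearMap.range (evalMap 2 x L)) ≤ x + 1 := by
  set EL := evalMap 2 x L with hELdef
  haveI : Module.Finite ℂ ℓ := FiniteDimensional.finiteDimensional_submodule ℓ
  let bas : Basis (Fin 2) ℂ ℓ := finBasisOfFinrankEq ℂ ℓ hℓ
  let ρ : MvPolynomial (Fin (2+1)) ℂ →ₐ[ℂ] MvPolynomial (Fin 2) ℂ :=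
    aeval (fun i : Fin (2+1) => ∑ j : Fin 2, C (((bas j : ℓ) : Fin (2+1) → ℂ) i) * X j)
  have hρhom : ∀ P : ↥(homogeneousSubmodule (Fin (2+1)) ℂ x),
      ρ (↑P) ∈ homogeneousSubmodule (Fin 2) ℂ x := by
    intro P
    rw [mem_homogeneousSubmodule]
    have hg : ∀ i : Fin (2+1),
        (∑ j : Fin 2, C (((bas j : ℓ) : Fin (2+1) → ℂ) i) * X j).IsHomogeneous 1 :=
      fun i => MvPolynomial.IsHomogeneous.sum _ _ _ fun j _ => isHomogeneous_C_mul_X _ _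
    have h := MvPolynomial.IsHomogeneous.aeval P.2 _ hg
    rwa [one_mul] at h
  let ρ' : (homogeneousSubmodule (Fin (2+1)) ℂ x) →ₗ[ℂ] (homogeneousSubmodule (Fin 2) ℂ x) :=
    LinearMap.codRestrict _ (ρ.toLinearMap ∘ₗ (homogeneousSubmodule (Fin (2+1)) ℂ x).subtype)
      hρhom
  have hrepmem : ∀ l : ↥L, ((l : Projectivization ℂ (Fin (2+1) → ℂ)).rep) ∈ ℓ :=
    fun l => (submodule_le_iff_rep_mem _ _).mp (hL _ l.2)
  let coords : ↥L → (Fin 2 → ℂ) := fun l => ⇑(bas.repr ⟨_, hrepmem l⟩)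
  let A2 : (homogeneousSubmodule (Fin 2) ℂ x) →ₗ[ℂ] (↥L → ℂ) :=
    LinearMap.pi fun l => (aeval (coords l)).toLinearMap ∘ₗ
      (homogeneousSubmodule (Fin 2) ℂ x).subtype
  have hkey : ∀ (P : MvPolynomial (Fin (2+1)) ℂ) (l : ↥L),
      aeval ((l : Projectivization ℂ (Fin (2+1) → ℂ)).rep) P = aeval (coords l) (ρ P) := by
    intro P l
    have halg : (aeval ((l : Projectivization ℂ (Fin (2+1) → ℂ)).rep) :
        MvPolynomial (Fin (2+1)) ℂ →ₐ[ℂ] ℂ) = (aeval (coords l)).comp ρ := by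
      apply MvPolynomial.algHom_ext
      intro i
      rw [aeval_X, AlgHom.comp_apply]
      show _ = aeval (coords l) (ρ (X i))
      rw [show ρ (X i) = ∑ j : Fin 2, C (((bas j : ℓ) : Fin (2+1) → ℂ) i) * X j from aeval_X _ i]
      rw [map_sum]
      have hv : ((l : Projectivization ℂ (Fin (2+1) → ℂ)).rep)
          = ∑ j : Fin 2, coords l j • ((bas j : ℓ) : Fin (2+1) → ℂ) := by
        have h0 := bas.sum_repr ⟨_, hrepmem l⟩
        have h1 := congrArg (Submodule.subtype ℓ) h0
        rw [map_sum] at h1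
        simp only [map_smul, Submodule.subtype_apply] at h1
        exact h1.symm
      conv_lhs => rw [hv]
      rw [Finset.sum_apply]
      refine Finset.sum_congr rfl fun j _ => ?_
      rw [map_mul, aeval_C, aeval_X]
      simp [mul_comm]
    exact AlgHom.congr_fun halg P
  have hfacL : EL = A2 ∘ₗ ρ' := by
    apply LinearMap.ext
    intro P
    funext l
    exact hkey (↑P) l
  obtain ⟨c2, hc2⟩ := finrank_homog2_le x
  haveI : FiniteDimensional ℂ (homogeneousSubmodule (Fin 2) ℂ x) :=
    FiniteDimensional.of_injective c2 hc2
  have hdim2 : finrank ℂ (homogeneousSubmodule (Fin 2) ℂ x) ≤ x + 1 := by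
    have h := LinearMap.finrank_le_finrank_of_injective hc2
    rwa [Module.finrank_fin_fun] at h
  have h3 : finrank ℂ (LinearMap.range EL) ≤ finrank ℂ (LinearMap.range A2) := by
    rw [hfacL]
    exact Submodule.finrank_mono (LinearMap.range_comp_le_range _ _)
  have h4 : finrank ℂ (LinearMap.range A2) ≤ finrank ℂ (homogeneousSubmodule (Fin 2) ℂ x) :=
    LinearMap.finrank_range_le _
  omega

/-- **Base case `m = 2` of Lemma 2 of Ballico–Bernardi.**  If `W ⊂ ℙ²` is a finite
set and `ℓ ⊂ ℙ²` a line with `#(W ∩ ℓ) ≥ x + 1` and `#(W ∖ ℓ) ≤ x`, then the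
corank of the evaluation map on degree-`x` forms equals `#(W ∩ ℓ) − x − 1`, i.e.
`rank + #(W ∩ ℓ) = #W + x + 1`. -/
theorem corank_eq_in_plane (x : ℕ) (hx : 1 ≤ x)
    (W : Finset (Projectivization ℂ (Fin (2+1) → ℂ)))
    (ℓ : Submodule ℂ (Fin (2+1) → ℂ)) (hℓ : finrank ℂ ℓ = 2)
    (h1 : x + 1 ≤ ((W : Set (Projectivization ℂ (Fin (2+1) → ℂ))) ∩
      {p | p.submodule ≤ ℓ}).ncard)
    (h2 : ((W : Set (Projectivization ℂ (Fin (2+1) → ℂ))) \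
      {p | p.submodule ≤ ℓ}).ncard ≤ x) :
    finrank ℂ (LinearMap.range (evalMap 2 x W)) +
      ((W : Set (Projectivization ℂ (Fin (2+1) → ℂ))) ∩ {p | p.submodule ≤ ℓ}).ncard =
      W.card + x + 1 := by
  classical
  let L := W.filter fun p => p.submodule ≤ ℓ
  let B := W.filter fun p => ¬ p.submodule ≤ ℓ
  have hLset : ((W : Set (Projectivization ℂ (Fin (2+1) → ℂ))) ∩ {p | p.submodule ≤ ℓ}) = ↑L := by
    ext p; simp only [Set.mem_inter_iff, Finset.coe_filter, Set.mem_setOf_eq, Finset.mem_coe, L]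
  have hBset : ((W : Set (Projectivization ℂ (Fin (2+1) → ℂ))) \ {p | p.submodule ≤ ℓ}) = ↑B := by
    ext p; simp only [Set.mem_diff, Finset.coe_filter, Set.mem_setOf_eq, Finset.mem_coe, B]
  rw [hLset, Set.ncard_coe_finset] at h1 ⊢
  rw [hBset, Set.ncard_coe_finset] at h2
  have hWcard : L.card + B.card = W.card := by
    rw [← Finset.card_union_of_disjoint (Finset.disjoint_filter_filter_not W W _),
      Finset.filter_union_filter_not_eq _ W]
  suffices h : finrank ℂ (LinearMap.range (evalMap 2 x W)) = B.card + (x+1) by omega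
  have lower : B.card + (x+1) ≤ finrank ℂ (LinearMap.range (evalMap 2 x W)) := by
    obtain ⟨S, hSL, hScard⟩ := Finset.exists_subset_card_eq h1
    have hSW : ∀ {s}, s ∈ S → s ∈ W := fun hs => (Finset.filter_subset _ W) (hSL hs)
    have hSl : ∀ {s}, s ∈ S → s.submodule ≤ ℓ := fun hs => (Finset.mem_filter.mp (hSL hs)).2
    have hsep : ∀ p q : Projectivization ℂ (Fin (2+1) → ℂ),
        ∃ φ : Module.Dual ℂ (Fin (2+1) → ℂ), p ≠ q → (φ p.rep = 0 ∧ φ q.rep ≠ 0) := by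
      intro p q
      by_cases h : p = q
      · exact ⟨0, fun hne => absurd h hne⟩
      · obtain ⟨φ, hφ1, hφ2⟩ := exists_dual_vanishing p.submodule q.rep (rep_nmem_submodule h)
        exact ⟨φ, fun _ => ⟨hφ2 p.rep (by
          rw [Projectivization.submodule_eq]
          exact Submodule.mem_span_singleton_self _), hφ1⟩⟩
    choose sep hsep using hsep
    have hlam : ∀ q : Projectivization ℂ (Fin (2+1) → ℂ),
        ∃ φ : Module.Dual ℂ (Fin (2+1) → ℂ),
          ¬ q.submodule ≤ ℓ → ((∀ w ∈ ℓ, φ w = 0) ∧ φ q.rep ≠ 0) := by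
      intro q
      by_cases h : q.submodule ≤ ℓ
      · exact ⟨0, fun hq => absurd h hq⟩
      · have hq : q.rep ∉ ℓ := fun hmem => h ((submodule_le_iff_rep_mem q ℓ).mpr hmem)
        obtain ⟨φ, hφ1, hφ2⟩ := exists_dual_vanishing ℓ q.rep hq
        exact ⟨φ, fun _ => ⟨hφ2, hφ1⟩⟩
    choose lam hlam using hlam
    have hmu : ∀ q : Projectivization ℂ (Fin (2+1) → ℂ),
        ∃ φ : Module.Dual ℂ (Fin (2+1) → ℂ), φ q.rep ≠ 0 := by
      intro q
      obtain ⟨φ, hφ1, _⟩ := exists_dual_vanishing ⊥ q.rep (by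
        simpa using Projectivization.rep_nonzero q)
      exact ⟨φ, hφ1⟩
    choose mu hmu using hmu
    set PS : Projectivization ℂ (Fin (2+1) → ℂ) → MvPolynomial (Fin (2+1)) ℂ :=
      fun s => ∏ p ∈ S.erase s, linPoly (sep p s) with hPSdef
    set PB : Projectivization ℂ (Fin (2+1) → ℂ) → MvPolynomial (Fin (2+1)) ℂ :=
      fun q => (linPoly (lam q) * ∏ p ∈ B.erase q, linPoly (sep p q))
        * linPoly (mu q) ^ (x - B.card) with hPBdef
    have hPS : ∀ s ∈ S, (PS s).IsHomogeneous x := by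
      intro s hs
      have h := MvPolynomial.IsHomogeneous.prod (S.erase s) _ (fun _ => 1)
        (fun p _ => linPoly_isHomogeneous (sep p s))
      rwa [Finset.sum_const, smul_eq_mul, mul_one, Finset.card_erase_of_mem hs, hScard,
        Nat.add_sub_cancel] at h
    have hPB : ∀ q ∈ B, (PB q).IsHomogeneous x := by
      intro q hq
      have hb1 : 1 ≤ B.card := Finset.card_pos.mpr ⟨q, hq⟩
      have ha := linPoly_isHomogeneous (lam q)
      have hp := MvPolynomial.IsHomogeneous.prod (B.erase q) _ (fun _ => 1)
        (fun p _ => linPoly_isHomogeneous (sep p q))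
      rw [Finset.sum_const, smul_eq_mul, mul_one, Finset.card_erase_of_mem hq] at hp
      have h3 := (linPoly_isHomogeneous (mu q)).pow (x - B.card)
      rw [one_mul] at h3
      have h := (ha.mul hp).mul h3
      rwa [show 1 + (B.card - 1) + (x - B.card) = x by omega] at h
    have vPS0 : ∀ s ∈ S, ∀ t ∈ S, t ≠ s → aeval t.rep (PS s) = 0 := by
      intro s hs t ht hts
      rw [hPSdef]
      rw [map_prod]
      refine Finset.prod_eq_zero (Finset.mem_erase.mpr ⟨hts, ht⟩) ?_
      rw [aeval_linPoly]
      exact (hsep t s hts).1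
    have vPSne : ∀ s ∈ S, aeval s.rep (PS s) ≠ 0 := by
      intro s hs
      rw [hPSdef, map_prod]
      refine Finset.prod_ne_zero_iff.mpr fun p hp => ?_
      rw [aeval_linPoly]
      exact (hsep p s (Finset.mem_erase.mp hp).1).2
    have vPBL : ∀ q ∈ B, ∀ p : Projectivization ℂ (Fin (2+1) → ℂ),
        p.submodule ≤ ℓ → aeval p.rep (PB q) = 0 := by
      intro q hq p hp
      have hqB : ¬ q.submodule ≤ ℓ := (Finset.mem_filter.mp hq).2
      rw [hPBdef]
      rw [map_mul, map_mul, aeval_linPoly,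
        (hlam q hqB).1 p.rep ((submodule_le_iff_rep_mem p ℓ).mp hp), zero_mul, zero_mul]
    have vPB0 : ∀ q ∈ B, ∀ r ∈ B, r ≠ q → aeval r.rep (PB q) = 0 := by
      intro q hq r hr hrq
      rw [hPBdef, map_mul, map_mul, map_prod]
      have h0 : aeval r.rep (linPoly (sep r q)) = 0 := by
        rw [aeval_linPoly]; exact (hsep r q hrq).1
      rw [Finset.prod_eq_zero (Finset.mem_erase.mpr ⟨hrq, hr⟩) h0, mul_zero, zero_mul]
    have vPBq : ∀ q ∈ B, aeval q.rep (PB q) ≠ 0 := by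
      intro q hq
      have hqB : ¬ q.submodule ≤ ℓ := (Finset.mem_filter.mp hq).2
      rw [hPBdef, map_mul, map_mul, map_prod, map_pow, aeval_linPoly, aeval_linPoly]
      refine mul_ne_zero (mul_ne_zero (hlam q hqB).2 (Finset.prod_ne_zero_iff.mpr fun p hp => ?_))
        (pow_ne_zero _ (hmu q))
      rw [aeval_linPoly]
      exact (hsep p q (Finset.mem_erase.mp hp).1).2
    set F : (↥S ⊕ ↥B) → (↥W → ℂ) :=
      Sum.elim (fun s => evalMap 2 x W ⟨PS s, hPS s s.2⟩)
        (fun q => evalMap 2 x W ⟨PB q, hPB q q.2⟩) with hFdef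
    have hFapp : ∀ (i : ↥S ⊕ ↥B) (w : ↥W),
        F i w = aeval ((w : Projectivization ℂ (Fin (2+1) → ℂ)).rep)
          (Sum.elim (fun s : ↥S => PS s) (fun q : ↥B => PB q) i) := by
      intro i w; cases i <;> rfl
    have hFind : LinearIndependent ℂ F := by
      rw [Fintype.linearIndependent_iff]
      intro g hg
      have hco : ∀ w : ↥W, ∑ i : ↥S ⊕ ↥B, g i * F i w = 0 := by
        intro w
        have h := congrFun hg w
        simpa [Finset.sum_apply] using h
      have hgS : ∀ s : ↥S, g (Sum.inl s) = 0 := by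
        intro s
        have hsW : (s : Projectivization ℂ (Fin (2+1) → ℂ)) ∈ W := hSW s.2
        have h := hco ⟨s, hsW⟩
        rw [Fintype.sum_sum_type] at h
        have hz : ∀ q : ↥B, g (Sum.inr q) * F (Sum.inr q) ⟨s, hsW⟩ = 0 := by
          intro q
          rw [hFapp, Sum.elim_inr, vPBL q q.2 s (hSl s.2), mul_zero]
        rw [Finset.sum_eq_zero (fun q _ => hz q), add_zero] at h
        have hone : ∑ s' : ↥S, g (Sum.inl s') * F (Sum.inl s') ⟨s, hsW⟩
            = g (Sum.inl s) * F (Sum.inl s) ⟨s, hsW⟩ := by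
          refine Fintype.sum_eq_single s fun s' hs' => ?_
          rw [hFapp, Sum.elim_inl, vPS0 s' s'.2 s s.2 (fun hc => hs' (Subtype.ext hc).symm),
            mul_zero]
        rw [hone] at h
        have hne : F (Sum.inl s) ⟨s, hsW⟩ ≠ 0 := by
          rw [hFapp, Sum.elim_inl]
          exact vPSne s s.2
        exact (mul_eq_zero.mp h).resolve_right hne
      have hgB : ∀ q : ↥B, g (Sum.inr q) = 0 := by
        intro q
        have hqW : (q : Projectivization ℂ (Fin (2+1) → ℂ)) ∈ W := (Finset.filter_subset _ W) q.2
        have h := hco ⟨q, hqW⟩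
        rw [Fintype.sum_sum_type] at h
        rw [Finset.sum_eq_zero (fun s' _ => by rw [hgS s', zero_mul])] at h
        rw [zero_add] at h
        have hone : ∑ q' : ↥B, g (Sum.inr q') * F (Sum.inr q') ⟨q, hqW⟩
            = g (Sum.inr q) * F (Sum.inr q) ⟨q, hqW⟩ := by
          refine Fintype.sum_eq_single q fun q' hq' => ?_
          rw [hFapp, Sum.elim_inr, vPB0 q' q'.2 q q.2 (fun hc => hq' (Subtype.ext hc).symm),
            mul_zero]
        rw [hone] at h
        have hne : F (Sum.inr q) ⟨q, hqW⟩ ≠ 0 := by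
          rw [hFapp, Sum.elim_inr]
          exact vPBq q q.2
        exact (mul_eq_zero.mp h).resolve_right hne
      intro i
      cases i with
      | inl s => exact hgS s
      | inr q => exact hgB q
    have hFmem : ∀ i, F i ∈ LinearMap.range (evalMap 2 x W) := by
      intro i
      cases i with
      | inl s => exact LinearMap.mem_range_self _ _
      | inr q => exact LinearMap.mem_range_self _ _
    let F' : (↥S ⊕ ↥B) → ↥(LinearMap.range (evalMap 2 x W)) := fun i => ⟨F i, hFmem i⟩
    have hF'ind : LinearIndependent ℂ F' := by
      apply LinearIndependent.of_comp (LinearMap.range (evalMap 2 x W)).subtype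
      exact hFind
    haveI hfin1 : Module.Finite ℂ (↥W → ℂ) := Module.Finite.pi
    haveI : Module.Finite ℂ ↥(LinearMap.range (evalMap 2 x W)) :=
      FiniteDimensional.finiteDimensional_submodule _
    have hcard := hF'ind.fintype_card_le_finrank
    rw [Fintype.card_sum, Fintype.card_coe, Fintype.card_coe, hScard] at hcard
    omega
  have upper : finrank ℂ (LinearMap.range (evalMap 2 x W)) ≤ B.card + (x+1) := by
    have hLW : ∀ {p}, p ∈ L → p ∈ W := fun hp => (Finset.filter_subset _ W) hp
    have hBW : ∀ {p}, p ∈ B → p ∈ W := fun hp => (Finset.filter_subset _ W) hp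
    set EL := evalMap 2 x L with hELdef
    set EB := evalMap 2 x B with hEBdef
    let ψL : (↥W → ℂ) →ₗ[ℂ] (↥L → ℂ) :=
      LinearMap.funLeft ℂ ℂ (fun l : ↥L => (⟨↑l, hLW l.2⟩ : ↥W))
    let ψB : (↥W → ℂ) →ₗ[ℂ] (↥B → ℂ) :=
      LinearMap.funLeft ℂ ℂ (fun b : ↥B => (⟨↑b, hBW b.2⟩ : ↥W))
    let Ψ := ψL.prod ψB
    have hΨinj : Function.Injective Ψ := by
      rw [← LinearMap.ker_eq_bot, eq_bot_iff]
      intro f hf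
      rw [LinearMap.mem_ker] at hf
      have hfL : ψL f = 0 := congrArg Prod.fst hf
      have hfB : ψB f = 0 := congrArg Prod.snd hf
      rw [Submodule.mem_bot]
      funext w
      by_cases hw : (w : Projectivization ℂ (Fin (2+1) → ℂ)).submodule ≤ ℓ
      · have hwL : (w : Projectivization ℂ (Fin (2+1) → ℂ)) ∈ L := Finset.mem_filter.mpr ⟨w.2, hw⟩
        have h := congrFun hfL ⟨w, hwL⟩
        exact h
      · have hwB : (w : Projectivization ℂ (Fin (2+1) → ℂ)) ∈ B := Finset.mem_filter.mpr ⟨w.2, hw⟩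
        have h := congrFun hfB ⟨w, hwB⟩
        exact h
    have hfac : Ψ ∘ₗ evalMap 2 x W = EL.prod EB := rfl
    haveI : Module.Finite ℂ ((↥L → ℂ) × (↥B → ℂ)) := Module.Finite.prod
    have e1 : finrank ℂ (LinearMap.range (evalMap 2 x W))
        = finrank ℂ (LinearMap.range (EL.prod EB)) := by
      rw [← hfac, LinearMap.range_comp]
      exact (Submodule.equivMapOfInjective Ψ hΨinj _).finrank_eq
    have e2 : finrank ℂ (LinearMap.range (EL.prod EB))
        ≤ finrank ℂ (LinearMap.range EL) + finrank ℂ (LinearMap.range EB) := by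
      rw [← finrank_submodule_prod]
      exact Submodule.finrank_mono (LinearMap.range_prod_le _ _)
    have eB : finrank ℂ (LinearMap.range EB) ≤ B.card := by
      have h := Submodule.finrank_le (LinearMap.range EB)
      rwa [Module.finrank_fintype_fun_eq_card, Fintype.card_coe] at h
    have eL : finrank ℂ (LinearMap.range EL) ≤ x + 1 :=
      rank_eval_on_line_le x ℓ hℓ L (fun p hp => (Finset.mem_filter.mp hp).2)
    omega
  omega

end
end
end

section
/- Let F be a nonzero homogeneous polynomial of degree d in x_0,…,x_m over ℂ with sbr(F) = sr(F) = ρ ≤ d. Suppose there exist two distinct finite sets A ≠ B of points of ℙ^m, each of cardinality ρ, such that F lies in the linear span of { L_a^d : a ∈ A } and in the linear span of { L_b^d : b ∈ B }. Then there is a line ℓ ⊂ ℙ^m such that #(ℓ ∩ A) ≥ (d + 2)/2. -/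
open MvPolynomial Filter Module

noncomputable section

/-- `F` is a sum of `s` `d`-th powers of linear forms in `m+1` variables. -/
def isSumOfPowers (m d s : ℕ) (F : MvPolynomial (Fin (m+1)) ℂ) : Prop :=
  ∃ L : Fin s → MvPolynomial (Fin (m+1)) ℂ,
    (∀ i, (L i).IsHomogeneous 1) ∧ F = ∑ i, (L i) ^ d

/-- The symmetric rank of `F`. -/
def symRank (m d : ℕ) (F : MvPolynomial (Fin (m+1)) ℂ) : ℕ :=
  sInf { r | isSumOfPowers m d r F }

/-- `F` lies in the Euclidean closure of the set of sums of `s` `d`-th powers of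
linear forms (equivalently, `F` is a coefficientwise limit of a sequence of such sums). -/
def isBorderSumOfPowers (m d s : ℕ) (F : MvPolynomial (Fin (m+1)) ℂ) : Prop :=
  ∃ G : ℕ → MvPolynomial (Fin (m+1)) ℂ,
    (∀ n, isSumOfPowers m d s (G n)) ∧
    ∀ μ : (Fin (m+1)) →₀ ℕ,
      Tendsto (fun n => MvPolynomial.coeff μ (G n)) atTop (nhds (MvPolynomial.coeff μ F))

/-- The symmetric border rank of `F`. -/
def symBorderRank (m d : ℕ) (F : MvPolynomial (Fin (m+1)) ℂ) : ℕ :=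
  sInf { s | isBorderSumOfPowers m d s F }

/-- The linear form `∑ v i • x i` associated to a vector `v : ℂ^{m+1}`. -/
def toLinForm (m : ℕ) (v : Fin (m+1) → ℂ) : MvPolynomial (Fin (m+1)) ℂ :=
  ∑ i, MvPolynomial.C (v i) * MvPolynomial.X i

/-- The `d`-th power `L_p^d` of a linear form representing the point `p ∈ ℙ^m`. -/
def vpow (m d : ℕ) (p : Projectivization ℂ (Fin (m+1) → ℂ)) : MvPolynomial (Fin (m+1)) ℂ :=
  (toLinForm m p.rep) ^ d

section Aux

variable {m : ℕ}

/-- The bilinear pairing on `ℂ^{m+1}`. -/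
def bil {m : ℕ} (v y : Fin (m+1) → ℂ) : ℂ := ∑ i, v i * y i

lemma bil_add_smul (v y u : Fin (m+1) → ℂ) (t : ℂ) :
    bil v (y + t • u) = bil v y + t * bil v u := by
  simp [bil, mul_add, Finset.sum_add_distrib, Finset.mul_sum, mul_left_comm]

lemma eval_toLinForm (v y : Fin (m+1) → ℂ) :
    MvPolynomial.eval y (toLinForm m v) = bil v y := by
  simp [toLinForm, bil]

lemma toLinForm_smul (a : ℂ) (v : Fin (m+1) → ℂ) :
    toLinForm m (a • v) = MvPolynomial.C a * toLinForm m v := by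
  simp [toLinForm, Finset.mul_sum, map_mul, mul_assoc]

lemma toLinForm_isHomogeneous (v : Fin (m+1) → ℂ) : (toLinForm m v).IsHomogeneous 1 := by
  apply MvPolynomial.IsHomogeneous.sum
  intro i _
  simpa using (MvPolynomial.isHomogeneous_C _ (v i)).mul (MvPolynomial.isHomogeneous_X _ i)

lemma exists_bil_dual (U : Submodule ℂ (Fin (m+1) → ℂ)) (x : Fin (m+1) → ℂ) (hx : x ∉ U) :
    ∃ y, (∀ w ∈ U, bil w y = 0) ∧ bil x y ≠ 0 := by
  obtain ⟨f, hfx, hfU⟩ := U.exists_dual_map_eq_bot_of_notMem hx inferInstance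
  have key : ∀ w : Fin (m+1) → ℂ, bil w (fun i => f (Pi.single i 1)) = f w := by
    intro w
    have hw : w = ∑ i, w i • (Pi.single i 1 : Fin (m+1) → ℂ) := by
      funext j
      simp [Pi.single_apply]
    conv_rhs => rw [hw]
    rw [map_sum]
    simp [bil]
  refine ⟨fun i => f (Pi.single i 1), ?_, ?_⟩
  · intro w hw
    rw [key]
    have : f w ∈ U.map f := Submodule.mem_map_of_mem hw
    rw [hfU] at this
    simpa using this
  · rw [key]; exact hfx

end Aux


section PtAux

variable {m : ℕ}

abbrev PP (m : ℕ) := Projectivization ℂ (Fin (m+1) → ℂ)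

lemma rep_notMem_span {p q : PP m} (h : p ≠ q) : p.rep ∉ (ℂ ∙ q.rep) := by
  intro hmem
  rw [Submodule.mem_span_singleton] at hmem
  obtain ⟨a, ha⟩ := hmem
  exact h (by
    rw [← p.mk_rep, ← q.mk_rep]
    exact (Projectivization.mk_eq_mk_iff' ℂ _ _ _ _).2 ⟨a, ha⟩)

lemma rep_pair_li {p q : PP m} (h : p ≠ q) :
    LinearIndependent ℂ ![p.rep, q.rep] := by
  rw [linearIndependent_fin2]
  constructor
  · simpa using q.rep_nonzero
  · intro a ha
    simp only [Matrix.cons_val_one, Matrix.head_cons, Matrix.cons_val_zero] at ha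
    exact rep_notMem_span h (by rw [Submodule.mem_span_singleton]; exact ⟨a, ha⟩)

lemma sup_submodule_eq (p q : PP m) :
    p.submodule ⊔ q.submodule = Submodule.span ℂ {p.rep, q.rep} := by
  rw [Projectivization.submodule_eq, Projectivization.submodule_eq, ← Submodule.span_union,
    Set.singleton_union]

lemma finrank_sup_eq_two {p q : PP m} (h : p ≠ q) :
    finrank ℂ ↥(p.submodule ⊔ q.submodule) = 2 := by
  rw [sup_submodule_eq]
  have hr := finrank_span_eq_card (rep_pair_li h)
  rw [show Set.range ![p.rep, q.rep] = {p.rep, q.rep} by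
    simp [Matrix.range_cons, Matrix.range_empty, Set.pair_comm]] at hr
  simpa using hr

lemma submodule_le_iff' {q : PP m} {W : Submodule ℂ (Fin (m+1) → ℂ)} :
    q.submodule ≤ W ↔ q.rep ∈ W := by
  rw [Projectivization.submodule_eq, Submodule.span_singleton_le_iff_mem]

end PtAux

section Polar

variable {m : ℕ} {ι : Type*}

lemma polar_step (Z : Finset ι) (v : ι → Fin (m+1) → ℂ) (c : ι → ℂ) (d : ℕ)
    (h : ∀ y, ∑ q ∈ Z, c q * bil (v q) y ^ (d+1) = 0) (u : Fin (m+1) → ℂ) :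
    ∀ y, ∑ q ∈ Z, (c q * bil (v q) u) * bil (v q) y ^ d = 0 := by
  intro y
  set P : Polynomial ℂ := ∑ q ∈ Z, Polynomial.C (c q) *
      (Polynomial.C (bil (v q) y) + Polynomial.C (bil (v q) u) * Polynomial.X) ^ (d+1) with hP
  have hP0 : P = 0 := by
    apply Polynomial.funext
    intro t
    rw [hP]
    simp only [Polynomial.eval_finset_sum, Polynomial.eval_mul, Polynomial.eval_C,
      Polynomial.eval_pow, Polynomial.eval_add, Polynomial.eval_X, Polynomial.eval_zero]
    have := h (y + t • u)
    simpa [bil_add_smul, mul_comm t] using this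
  have hD : Polynomial.eval 0 (Polynomial.derivative P) =
      ∑ q ∈ Z, c q * ((d+1 : ℂ) * bil (v q) y ^ d * bil (v q) u) := by
    rw [hP, map_sum, Polynomial.eval_finset_sum]
    refine Finset.sum_congr rfl fun q _ => ?_
    rw [Polynomial.derivative_C_mul, Polynomial.derivative_pow]
    simp [Polynomial.derivative_add]
  rw [hP0] at hD
  simp only [map_zero, Polynomial.eval_zero] at hD
  have hd1 : (d+1 : ℂ) ≠ 0 := Nat.cast_add_one_ne_zero d
  have : (d+1 : ℂ) * ∑ q ∈ Z, (c q * bil (v q) u) * bil (v q) y ^ d = 0 := by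
    rw [Finset.mul_sum]
    rw [← hD.symm] at *
    rw [← hD]
    exact Finset.sum_congr rfl fun q _ => by ring
  rcases mul_eq_zero.1 this with h' | h'
  · exact absurd h' hd1
  · exact h'

lemma polar_full (Z : Finset ι) (v : ι → Fin (m+1) → ℂ) :
    ∀ (d : ℕ) (c : ι → ℂ), (∀ y, ∑ q ∈ Z, c q * bil (v q) y ^ d = 0) →
      ∀ u : ℕ → Fin (m+1) → ℂ,
        ∑ q ∈ Z, c q * ∏ j ∈ Finset.range d, bil (v q) (u j) = 0 := by
  intro d
  induction d with
  | zero => intro c h u; simpa using h 0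
  | succ d ih =>
      intro c h u
      have h' := polar_step Z v c d h (u 0)
      have h2 := ih (fun q => c q * bil (v q) (u 0)) h' (fun j => u (j+1))
      rw [← h2]
      refine Finset.sum_congr rfl fun q _ => ?_
      rw [Finset.prod_range_succ']
      ring

end Polar

/-- Pairing/covering lemma: if every `f`-class of `Q` has at most `Bnd` elements and
`Q` has at most `2*Bnd` elements, then `Q` can be covered by at most `Bnd` groups,
each a singleton or a pair with distinct `f`-values. -/
lemma pairing_cover {X Y : Type*} [DecidableEq X] (f : X → Y) :
    ∀ (Bnd : ℕ) (Q : Finset X),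
      (∀ x ∈ Q, ∀ R : Finset X, R ⊆ Q → (∀ z ∈ R, f z = f x) → R.card ≤ Bnd) →
      Q.card ≤ 2 * Bnd →
      ∃ l : List (Finset X), l.length ≤ Bnd ∧ (∀ x ∈ Q, ∃ g ∈ l, x ∈ g) ∧
        ∀ g ∈ l, g ⊆ Q ∧ ((∃ x, g = {x}) ∨
          (∃ x y, x ≠ y ∧ f x ≠ f y ∧ g = ({x, y} : Finset X))) := by
  classical
  intro Bnd
  induction Bnd with
  | zero =>
      intro Q _ hcard
      have : Q = ∅ := Finset.card_eq_zero.1 (Nat.le_zero.1 hcard)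
      exact ⟨[], by simp, by simp [this], by simp⟩
  | succ B ih =>
      intro Q hclass hcard
      rcases Finset.eq_empty_or_nonempty Q with rfl | hne
      · exact ⟨[], by simp, by simp, by simp⟩
      by_cases hone : ∀ x ∈ Q, ∀ y ∈ Q, f x = f y
      · -- all one class: singletons
        obtain ⟨x₀, hx₀⟩ := hne
        have hQcard : Q.card ≤ B + 1 := hclass x₀ hx₀ Q (le_refl _) (fun z hz => hone z hz x₀ hx₀)
        refine ⟨Q.toList.map (fun x => {x}), ?_, ?_, ?_⟩
        · simpa using hQcard
        · intro x hx
          exact ⟨{x}, List.mem_map.2 ⟨x, Finset.mem_toList.2 hx, rfl⟩, Finset.mem_singleton_self x⟩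
        · intro g hg
          obtain ⟨x, hx, rfl⟩ := List.mem_map.1 hg
          exact ⟨Finset.singleton_subset_iff.2 (Finset.mem_toList.1 hx), Or.inl ⟨x, rfl⟩⟩
      · push_neg at hone
        obtain ⟨x₁, hx₁, y₁, hy₁, hfxy⟩ := hone
        obtain ⟨x, hx, hmax⟩ := Finset.exists_max_image Q
          (fun z => (Q.filter (fun w => f w = f z)).card) hne
        obtain ⟨y, hy, hfy⟩ : ∃ y ∈ Q, f y ≠ f x := by
          by_cases h1 : f x₁ = f x
          · exact ⟨y₁, hy₁, fun h => hfxy (h1.trans h.symm)⟩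
          · exact ⟨x₁, hx₁, h1⟩
        have hyx : y ≠ x := fun h => hfy (by rw [h])
        set Q' := (Q.erase x).erase y with hQ'
        have hQ'sub : Q' ⊆ Q := (Finset.erase_subset _ _).trans (Finset.erase_subset _ _)
        have hxQ' : x ∉ Q' := fun h => (Finset.mem_erase.1 (Finset.mem_of_mem_erase h)).1 rfl
        have hyQ' : y ∉ Q' := fun h => (Finset.mem_erase.1 h).1 rfl
        have hyQx : y ∈ Q.erase x := Finset.mem_erase.2 ⟨hyx, hy⟩
        have hQ'card : Q'.card ≤ 2 * B := by
          rw [hQ']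
          have h1 := Finset.card_erase_of_mem hyQx
          have h2 := Finset.card_erase_of_mem hx
          have h3 : 1 ≤ Q.card := Finset.card_pos.2 ⟨x, hx⟩
          have h4 : 1 ≤ (Q.erase x).card := Finset.card_pos.2 ⟨y, hyQx⟩
          omega
        have hclass' : ∀ z ∈ Q', ∀ R : Finset X, R ⊆ Q' → (∀ w ∈ R, f w = f z) → R.card ≤ B := by
          intro z hz R hR hRf
          by_cases hzx : f z = f x
          · have hxR : x ∉ R := fun h => hxQ' (hR h)
            have h1 : (insert x R).card ≤ B + 1 :=
              hclass x hx (insert x R)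
                (Finset.insert_subset hx (hR.trans hQ'sub))
                (by
                  intro w hw
                  rcases Finset.mem_insert.1 hw with rfl | hw
                  · rfl
                  · exact (hRf w hw).trans hzx)
            rw [Finset.card_insert_of_notMem hxR] at h1
            omega
          by_cases hzy : f z = f y
          · have hyR : y ∉ R := fun h => hyQ' (hR h)
            have h1 : (insert y R).card ≤ B + 1 :=
              hclass y hy (insert y R)
                (Finset.insert_subset hy (hR.trans hQ'sub))
                (by
                  intro w hw
                  rcases Finset.mem_insert.1 hw with rfl | hw
                  · rfl
                  · exact (hRf w hw).trans hzy)
            rw [Finset.card_insert_of_notMem hyR] at h1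
            omega
          · -- f z differs from both f x and f y
            by_contra hgt
            push_neg at hgt
            have hRQ : R ⊆ Q.filter (fun w => f w = f z) := by
              intro w hw
              exact Finset.mem_filter.2 ⟨hQ'sub (hR hw), hRf w hw⟩
            have hzcard : B + 1 ≤ (Q.filter (fun w => f w = f z)).card :=
              le_trans hgt (Finset.card_le_card hRQ)
            have hxcard : B + 1 ≤ (Q.filter (fun w => f w = f x)).card :=
              le_trans hzcard (hmax z (hQ'sub hz))
            have hdisj : Disjoint (Q.filter (fun w => f w = f z))
                (Q.filter (fun w => f w = f x)) := by
              rw [Finset.disjoint_filter]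
              intro w _ hwz hwx
              exact hzx (hwz ▸ hwx)
            have hunion : (Q.filter (fun w => f w = f z)) ∪ (Q.filter (fun w => f w = f x)) = Q := by
              apply Finset.eq_of_subset_of_card_le (Finset.union_subset
                (Finset.filter_subset _ _) (Finset.filter_subset _ _))
              rw [Finset.card_union_of_disjoint hdisj]
              omega
            have hyQ2 : y ∈ (Q.filter (fun w => f w = f z)) ∪ (Q.filter (fun w => f w = f x)) :=
              hunion.symm ▸ hy
            rcases Finset.mem_union.1 hyQ2 with h' | h'
            · exact hzy ((Finset.mem_filter.1 h').2).symm
            · exact hfy (Finset.mem_filter.1 h').2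
        obtain ⟨l', hlen', hcov', hg'⟩ := ih Q' hclass' hQ'card
        refine ⟨({x, y} : Finset X) :: l', by simpa using hlen', ?_, ?_⟩
        · intro w hw
          by_cases hwx : w = x
          · exact ⟨{x, y}, List.mem_cons_self, by simp [hwx]⟩
          by_cases hwy : w = y
          · exact ⟨{x, y}, List.mem_cons_self, by simp [hwy]⟩
          · obtain ⟨g, hg, hwg⟩ := hcov' w (Finset.mem_erase.2 ⟨hwy, Finset.mem_erase.2 ⟨hwx, hw⟩⟩)
            exact ⟨g, List.mem_cons_of_mem _ hg, hwg⟩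
        · intro g hg
          rcases List.mem_cons.1 hg with rfl | hg
          · refine ⟨Finset.insert_subset hx (Finset.singleton_subset_iff.2 hy), Or.inr ?_⟩
            exact ⟨x, y, hyx.symm, hfy.symm, rfl⟩
          · obtain ⟨hsub, hshape⟩ := hg' g hg
            exact ⟨hsub.trans hQ'sub, hshape⟩

section Cov

variable {m : ℕ} {ι : Type*}

/-- If `Z.erase p` can be covered by at most `d` groups, each "avoidable" from `p`
(i.e. `v p` is not in the span of the group's vectors), then any linear relation among
the `d`-th powers supported on `Z` has vanishing `p`-coefficient. -/
lemma cov (d : ℕ) (Z : Finset ι) (v : ι → Fin (m+1) → ℂ) (c : ι → ℂ)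
    (hrel : ∀ y, ∑ q ∈ Z, c q * bil (v q) y ^ d = 0)
    (p : ι) (hp : p ∈ Z) (hvp : v p ≠ 0)
    (l : List (Finset ι)) (hlen : l.length ≤ d)
    (hcov : ∀ q ∈ Z, q ≠ p → ∃ g ∈ l, q ∈ g)
    (hsep : ∀ g ∈ l, v p ∉ Submodule.span ℂ (v '' ↑g)) :
    c p = 0 := by
  classical
  have hex : ∀ g ∈ l, ∃ u, (∀ q ∈ g, bil (v q) u = 0) ∧ bil (v p) u ≠ 0 := by
    intro g hg
    obtain ⟨y, hy0, hyp⟩ := exists_bil_dual _ _ (hsep g hg)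
    exact ⟨y, fun q hq => hy0 _ (Submodule.subset_span ⟨q, by simpa using hq, rfl⟩), hyp⟩
  choose! uu huu1 huu2 using hex
  obtain ⟨upad, _, hpadne⟩ := exists_bil_dual (⊥ : Submodule ℂ (Fin (m+1) → ℂ)) (v p)
    (by simpa using hvp)
  set u : ℕ → Fin (m+1) → ℂ :=
    fun j => if h : j < l.length then uu (l.get ⟨j, h⟩) else upad with hu
  have hmain := polar_full Z v d c hrel u
  have hzero : ∀ q ∈ Z, q ≠ p → c q * ∏ j ∈ Finset.range d, bil (v q) (u j) = 0 := by
    intro q hq hqp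
    obtain ⟨g, hg, hqg⟩ := hcov q hq hqp
    obtain ⟨⟨j, hj⟩, hget⟩ := List.mem_iff_get.1 hg
    have hjd : j ∈ Finset.range d := Finset.mem_range.2 (lt_of_lt_of_le hj hlen)
    have hfac : bil (v q) (u j) = 0 := by
      rw [hu]
      simp only [dif_pos hj, hget]
      exact huu1 g hg q hqg
    rw [Finset.prod_eq_zero hjd hfac, mul_zero]
  have hsingle : c p * ∏ j ∈ Finset.range d, bil (v p) (u j) = 0 := by
    rw [← hmain]
    exact (Finset.sum_eq_single p hzero (fun h => absurd hp h)).symm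
  have hprod : ∏ j ∈ Finset.range d, bil (v p) (u j) ≠ 0 := by
    apply Finset.prod_ne_zero_iff.2
    intro j _
    rw [hu]
    by_cases hj : j < l.length
    · simp only [dif_pos hj]
      exact huu2 _ (List.get_mem l ⟨j, hj⟩)
    · simp only [dif_neg hj]
      exact hpadne
  rcases mul_eq_zero.1 hsingle with h' | h'
  · exact h'
  · exact absurd h' hprod

end Cov

section Rank

variable {m : ℕ}

lemma isSumOfPowers_of_span (m d : ℕ) (hd : 0 < d) (F : MvPolynomial (Fin (m+1)) ℂ)
    (S : Finset (Projectivization ℂ (Fin (m+1) → ℂ)))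
    (γ : Projectivization ℂ (Fin (m+1) → ℂ) → ℂ)
    (hF : F = ∑ p ∈ S, γ p • vpow m d p) :
    isSumOfPowers m d S.card F := by
  classical
  have hroot : ∀ p, ∃ ξ : ℂ, ξ ^ d = γ p := fun p => IsAlgClosed.exists_pow_nat_eq _ hd
  choose ξ hξ using hroot
  refine ⟨fun i => toLinForm m (ξ ((S.equivFin.symm i : _)) • ((S.equivFin.symm i : _) :
    Projectivization ℂ (Fin (m+1) → ℂ)).rep), fun i => toLinForm_isHomogeneous _, ?_⟩
  have hterm : ∀ p : Projectivization ℂ (Fin (m+1) → ℂ),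
      (toLinForm m (ξ p • p.rep)) ^ d = γ p • vpow m d p := by
    intro p
    rw [toLinForm_smul, mul_pow, ← map_pow, hξ, vpow, MvPolynomial.smul_eq_C_mul]
  calc F = ∑ p ∈ S, γ p • vpow m d p := hF
    _ = ∑ x : {x // x ∈ S}, γ x • vpow m d x := (Finset.sum_attach S _).symm
    _ = ∑ i : Fin S.card, γ (S.equivFin.symm i : _) • vpow m d (S.equivFin.symm i : _) :=
        (Equiv.sum_comp S.equivFin.symm _).symm
    _ = _ := by
        refine Finset.sum_congr rfl fun i _ => ?_
        rw [hterm]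

lemma symRank_le_of_span (m d : ℕ) (hd : 0 < d) (F : MvPolynomial (Fin (m+1)) ℂ)
    (S : Finset (Projectivization ℂ (Fin (m+1) → ℂ)))
    (γ : Projectivization ℂ (Fin (m+1) → ℂ) → ℂ)
    (hF : F = ∑ p ∈ S, γ p • vpow m d p) :
    symRank m d F ≤ S.card :=
  Nat.sInf_le (isSumOfPowers_of_span m d hd F S γ hF)

lemma vpow_injective {d : ℕ} (hd : 0 < d) :
    Function.Injective (vpow m d) := by
  intro p q h
  by_contra hne
  obtain ⟨y, hy0, hyp⟩ := exists_bil_dual (ℂ ∙ (Projectivization.rep q)) p.rep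
    (rep_notMem_span hne)
  have hq0 : bil q.rep y = 0 := hy0 _ (Submodule.mem_span_singleton_self _)
  have heval := congrArg (MvPolynomial.eval y) h
  rw [vpow, vpow, map_pow, map_pow, eval_toLinForm, eval_toLinForm, hq0] at heval
  rw [zero_pow hd.ne'] at heval
  exact hyp (pow_eq_zero_iff hd.ne' |>.1 heval)

end Rank

/-- **Lemma 3 of Ballico–Bernardi** (reduced case).  If `sbr F = sr F = ρ ≤ d` and
`F` lies in the spans of the `d`-th powers of two distinct `ρ`-point subsets
`A ≠ B` of `ℙ^m`, then some line `ℓ` meets `A` in at least `(d+2)/2` points. -/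
theorem line_from_two_decompositions (m d ρ : ℕ) (F : MvPolynomial (Fin (m+1)) ℂ)
    (hF0 : F ≠ 0) (hFhom : F.IsHomogeneous d)
    (hbr : symBorderRank m d F = ρ) (hr : symRank m d F = ρ) (hρd : ρ ≤ d)
    (A B : Finset (Projectivization ℂ (Fin (m+1) → ℂ))) (hAB : A ≠ B)
    (hA : A.card = ρ) (hB : B.card = ρ)
    (hFA : F ∈ Submodule.span ℂ (vpow m d '' (A : Set (Projectivization ℂ (Fin (m+1) → ℂ)))))
    (hFB : F ∈ Submodule.span ℂ (vpow m d '' (B : Set (Projectivization ℂ (Fin (m+1) → ℂ))))) :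
    ∃ ℓ : Submodule ℂ (Fin (m+1) → ℂ), finrank ℂ ℓ = 2 ∧
      d + 2 ≤ 2 * ((A : Set (Projectivization ℂ (Fin (m+1) → ℂ))) ∩
        {p | p.submodule ≤ ℓ}).ncard := by
  classical
  -- `ρ` and `d` are positive
  have hρpos : 0 < ρ := by
    rcases Nat.eq_zero_or_pos ρ with h0 | h
    · exfalso
      apply hAB
      rw [Finset.card_eq_zero.1 (hA.trans h0), Finset.card_eq_zero.1 (hB.trans h0)]
    · exact h
  have hdpos : 0 < d := lt_of_lt_of_le hρpos hρd
  have hinj : Function.Injective (vpow m d) := vpow_injective hdpos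
  -- extract decomposition coefficients
  have getCoeff : ∀ S : Finset (Projectivization ℂ (Fin (m+1) → ℂ)),
      F ∈ Submodule.span ℂ (vpow m d '' (S : Set (Projectivization ℂ (Fin (m+1) → ℂ)))) →
      ∃ γ : Projectivization ℂ (Fin (m+1) → ℂ) → ℂ, F = ∑ p ∈ S, γ p • vpow m d p := by
    intro S hS
    rw [← Finset.coe_image, Submodule.mem_span_finset] at hS
    obtain ⟨f, -, hf⟩ := hS
    refine ⟨fun p => f (vpow m d p), ?_⟩
    rw [← hf, Finset.sum_image (fun x _ y _ h => hinj h)]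
  obtain ⟨α, hα⟩ := getCoeff A hFA
  obtain ⟨β, hβ⟩ := getCoeff B hFB
  -- all coefficients are nonzero, by minimality of the rank
  have hcoeff_ne : ∀ (S : Finset (Projectivization ℂ (Fin (m+1) → ℂ)))
      (γ : Projectivization ℂ (Fin (m+1) → ℂ) → ℂ), S.card = ρ →
      F = ∑ p ∈ S, γ p • vpow m d p → ∀ p ∈ S, γ p ≠ 0 := by
    intro S γ hcard hFS p hp h0
    have hF' : F = ∑ q ∈ S.erase p, γ q • vpow m d q := by
      rw [hFS, ← Finset.add_sum_erase _ _ hp, h0, zero_smul, zero_add]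
    have hle := symRank_le_of_span m d hdpos F _ _ hF'
    rw [hr] at hle
    have := Finset.card_erase_of_mem hp
    omega
  have hαne := hcoeff_ne A α hA hα
  have hβne := hcoeff_ne B β hB hβ
  -- the difference of the two decompositions is a linear relation
  set Z : Finset (Projectivization ℂ (Fin (m+1) → ℂ)) := A ∪ B with hZ
  set c : Projectivization ℂ (Fin (m+1) → ℂ) → ℂ :=
    fun q => (if q ∈ A then α q else 0) - (if q ∈ B then β q else 0) with hc
  have hAZ : A ⊆ Z := by rw [hZ]; exact Finset.subset_union_left
  have hBZ : B ⊆ Z := by rw [hZ]; exact Finset.subset_union_right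
  have hZcard : Z.card ≤ 2 * d := by
    have h1 : Z.card ≤ A.card + B.card := by rw [hZ]; exact Finset.card_union_le A B
    omega
  have hsumA : ∑ q ∈ Z, (if q ∈ A then α q else 0) • vpow m d q = F := by
    have h1 : ∑ q ∈ A, (if q ∈ A then α q else 0) • vpow m d q
        = ∑ q ∈ Z, (if q ∈ A then α q else 0) • vpow m d q :=
      Finset.sum_subset hAZ (fun q _ hqA => by rw [if_neg hqA, zero_smul])
    rw [← h1, hα]
    exact Finset.sum_congr rfl fun q hq => by rw [if_pos hq]
  have hsumB : ∑ q ∈ Z, (if q ∈ B then β q else 0) • vpow m d q = F := by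
    have h1 : ∑ q ∈ B, (if q ∈ B then β q else 0) • vpow m d q
        = ∑ q ∈ Z, (if q ∈ B then β q else 0) • vpow m d q :=
      Finset.sum_subset hBZ (fun q _ hqB => by rw [if_neg hqB, zero_smul])
    rw [← h1, hβ]
    exact Finset.sum_congr rfl fun q hq => by rw [if_pos hq]
  have hrel0 : ∑ q ∈ Z, c q • vpow m d q = 0 := by
    have hsplit : ∀ q, c q • vpow m d q
        = (if q ∈ A then α q else 0) • vpow m d q - (if q ∈ B then β q else 0) • vpow m d q :=
      fun q => sub_smul _ _ _
    rw [Finset.sum_congr rfl fun q _ => hsplit q, Finset.sum_sub_distrib, hsumA, hsumB, sub_self]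
  have hrel : ∀ y, ∑ q ∈ Z, c q * bil (Projectivization.rep q) y ^ d = 0 := by
    intro y
    have h1 := congrArg (MvPolynomial.eval y) hrel0
    rw [map_sum, map_zero] at h1
    rw [← h1]
    refine Finset.sum_congr rfl fun q _ => ?_
    rw [MvPolynomial.smul_eq_C_mul, map_mul, MvPolynomial.eval_C, vpow, map_pow, eval_toLinForm]
  by_cases hline : ∃ W : Submodule ℂ (Fin (m+1) → ℂ), finrank ℂ W = 2 ∧
      d + 2 ≤ (Z.filter (fun q => q.submodule ≤ W)).card
  · -- there is a line containing at least d+2 points of Z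
    obtain ⟨W, hW2, hScard⟩ := hline
    refine ⟨W, hW2, ?_⟩
    -- the relation is supported on the line
    have hsupp : ∀ q ∈ Z, ¬ q.submodule ≤ W → c q = 0 := by
      intro q hq hqW
      set T : Finset (Projectivization ℂ (Fin (m+1) → ℂ)) :=
        (Z.filter (fun r => ¬ r.submodule ≤ W)).erase q with hT
      set l : List (Finset (Projectivization ℂ (Fin (m+1) → ℂ))) :=
        (Z.filter (fun r => r.submodule ≤ W)) :: T.toList.map
          (fun r => ({r} : Finset (Projectivization ℂ (Fin (m+1) → ℂ)))) with hl
      have hqT : q ∈ Z.filter (fun r => ¬ r.submodule ≤ W) := Finset.mem_filter.2 ⟨hq, hqW⟩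
      have hlen : l.length ≤ d := by
        rw [hl]
        simp only [List.length_cons, List.length_map, Finset.length_toList]
        have h1 := Finset.card_erase_of_mem hqT
        rw [← hT] at h1
        have h2 := Finset.card_filter_add_card_filter_not
          (s := Z) (p := fun r : Projectivization ℂ (Fin (m+1) → ℂ) => r.submodule ≤ W)
        have h3 : 1 ≤ (Z.filter (fun r => ¬ r.submodule ≤ W)).card :=
          Finset.card_pos.2 ⟨q, hqT⟩
        omega
      apply cov d Z (fun r => Projectivization.rep r) c hrel q hq q.rep_nonzero l hlen
      · intro r hr hrq
        by_cases hrW : r.submodule ≤ W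
        · exact ⟨Z.filter (fun r => r.submodule ≤ W), List.mem_cons_self,
            Finset.mem_filter.2 ⟨hr, hrW⟩⟩
        · refine ⟨{r}, ?_, Finset.mem_singleton_self r⟩
          rw [hl]
          refine List.mem_cons_of_mem _ (List.mem_map.2 ⟨r, ?_, rfl⟩)
          rw [Finset.mem_toList, hT]
          exact Finset.mem_erase.2 ⟨hrq, Finset.mem_filter.2 ⟨hr, hrW⟩⟩
      · intro g hgl
        rcases List.mem_cons.1 hgl with rfl | hgl
        · intro hmem
          have hspan : Submodule.span ℂ
              ((fun r : Projectivization ℂ (Fin (m+1) → ℂ) => Projectivization.rep r) ''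
                ↑(Z.filter (fun r => r.submodule ≤ W))) ≤ W := by
            rw [Submodule.span_le]
            rintro _ ⟨r, hrS, rfl⟩
            have hr' : r ∈ Z.filter (fun r => r.submodule ≤ W) := by exact_mod_cast hrS
            exact submodule_le_iff'.1 (Finset.mem_filter.1 hr').2
          exact hqW (submodule_le_iff'.2 (hspan hmem))
        · obtain ⟨r, hrT, rfl⟩ := List.mem_map.1 hgl
          have hrT' := Finset.mem_toList.1 hrT
          have hrq : r ≠ q := Finset.ne_of_mem_erase hrT'
          intro hmem
          apply rep_notMem_span (Ne.symm hrq)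
          have himg : ((fun r : Projectivization ℂ (Fin (m+1) → ℂ) => Projectivization.rep r) ''
              ↑({r} : Finset (Projectivization ℂ (Fin (m+1) → ℂ)))) = {Projectivization.rep r} := by
            simp
          rw [himg] at hmem
          exact hmem
    -- off-line parts of A and B coincide
    have hfeq : A.filter (fun q => ¬ q.submodule ≤ W) = B.filter (fun q => ¬ q.submodule ≤ W) := by
      ext q
      simp only [Finset.mem_filter]
      constructor
      · rintro ⟨hqA, hqW⟩
        refine ⟨?_, hqW⟩
        by_contra hqB
        have hcq := hsupp q (hAZ hqA) hqW
        simp only [hc, if_pos hqA, if_neg hqB, sub_zero] at hcq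
        exact hαne q hqA hcq
      · rintro ⟨hqB, hqW⟩
        refine ⟨?_, hqW⟩
        by_contra hqA
        have hcq := hsupp q (hBZ hqB) hqW
        simp only [hc, if_pos hqB, if_neg hqA, zero_sub, neg_eq_zero] at hcq
        exact hβne q hqB hcq
    have hAcard := Finset.card_filter_add_card_filter_not
      (s := A) (p := fun q : Projectivization ℂ (Fin (m+1) → ℂ) => q.submodule ≤ W)
    have hBcard := Finset.card_filter_add_card_filter_not
      (s := B) (p := fun q : Projectivization ℂ (Fin (m+1) → ℂ) => q.submodule ≤ W)
    have hfeqcard := congrArg Finset.card hfeq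
    have hsub2 : Z.filter (fun q => q.submodule ≤ W) ⊆
        A.filter (fun q => q.submodule ≤ W) ∪ B.filter (fun q => q.submodule ≤ W) := by
      intro q hq
      obtain ⟨hqZ, hqW⟩ := Finset.mem_filter.1 hq
      rw [hZ] at hqZ
      rcases Finset.mem_union.1 hqZ with h | h
      · exact Finset.mem_union_left _ (Finset.mem_filter.2 ⟨h, hqW⟩)
      · exact Finset.mem_union_right _ (Finset.mem_filter.2 ⟨h, hqW⟩)
    have hfin : d + 2 ≤ 2 * (A.filter (fun q => q.submodule ≤ W)).card := by
      have h3 := Finset.card_le_card hsub2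
      have h4 := Finset.card_union_le (A.filter (fun q => q.submodule ≤ W))
        (B.filter (fun q => q.submodule ≤ W))
      omega
    have hset : ((A : Set (Projectivization ℂ (Fin (m+1) → ℂ))) ∩ {p | p.submodule ≤ W})
        = ↑(A.filter (fun q => q.submodule ≤ W)) := by
      ext q
      simp [Set.mem_inter_iff]
    rw [hset, Set.ncard_coe_finset]
    exact hfin
  · -- no line: the relation must be trivial, contradicting A ≠ B
    exfalso
    push_neg at hline
    have hc0 : ∀ p ∈ Z, c p = 0 := by
      intro p hp
      have hQcard : (Z.erase p).card ≤ 2 * d :=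
        le_trans (Finset.card_le_card (Finset.erase_subset _ _)) hZcard
      have hclass : ∀ x ∈ Z.erase p,
          ∀ R : Finset (Projectivization ℂ (Fin (m+1) → ℂ)), R ⊆ Z.erase p →
          (∀ z ∈ R, p.submodule ⊔ z.submodule = p.submodule ⊔ x.submodule) → R.card ≤ d := by
        intro x hx R hR hRf
        have hxp : x ≠ p := Finset.ne_of_mem_erase hx
        have hW2 : finrank ℂ ↥(p.submodule ⊔ x.submodule) = 2 := finrank_sup_eq_two (Ne.symm hxp)
        have hsub : insert p R ⊆ Z.filter (fun q => q.submodule ≤ p.submodule ⊔ x.submodule) := by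
          intro z hz
          rcases Finset.mem_insert.1 hz with rfl | hz
          · exact Finset.mem_filter.2 ⟨hp, le_sup_left⟩
          · refine Finset.mem_filter.2 ⟨Finset.mem_of_mem_erase (hR hz), ?_⟩
            rw [← hRf z hz]
            exact le_sup_right
        have hpR : p ∉ R := fun h => (Finset.mem_erase.1 (hR h)).1 rfl
        have h1 := Finset.card_le_card hsub
        rw [Finset.card_insert_of_notMem hpR] at h1
        have h2 := hline (p.submodule ⊔ x.submodule) hW2
        omega
      obtain ⟨l, hlen, hcov', hg⟩ := pairing_cover
        (fun q : Projectivization ℂ (Fin (m+1) → ℂ) => p.submodule ⊔ q.submodule)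
        d (Z.erase p) hclass hQcard
      apply cov d Z (fun r => Projectivization.rep r) c hrel p hp p.rep_nonzero l hlen
      · intro q hq hqp
        exact hcov' q (Finset.mem_erase.2 ⟨hqp, hq⟩)
      · intro g hgl
        obtain ⟨hgsub, hshape⟩ := hg g hgl
        rcases hshape with ⟨x, rfl⟩ | ⟨x, y, hxy, hfxy, rfl⟩
        · have hxQ := hgsub (Finset.mem_singleton_self x)
          have hxp : x ≠ p := Finset.ne_of_mem_erase hxQ
          intro hmem
          apply rep_notMem_span (Ne.symm hxp)
          have himg : ((fun r : Projectivization ℂ (Fin (m+1) → ℂ) => Projectivization.rep r) ''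
              ↑({x} : Finset (Projectivization ℂ (Fin (m+1) → ℂ)))) = {Projectivization.rep x} := by
            simp
          rw [himg] at hmem
          exact hmem
        · have hxQ := hgsub (Finset.mem_insert_self x {y})
          have hyQ := hgsub (Finset.mem_insert_of_mem (Finset.mem_singleton_self y))
          have hpx : p ≠ x := Ne.symm (Finset.ne_of_mem_erase hxQ)
          have hpy : p ≠ y := Ne.symm (Finset.ne_of_mem_erase hyQ)
          intro hmem
          have himg : ((fun r : Projectivization ℂ (Fin (m+1) → ℂ) => Projectivization.rep r) ''
              ↑({x, y} : Finset (Projectivization ℂ (Fin (m+1) → ℂ))))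
              = {Projectivization.rep x, Projectivization.rep y} := by
            simp [Set.image_insert_eq]
          rw [himg] at hmem
          have hU2 : finrank ℂ
              ↥(Submodule.span ℂ ({Projectivization.rep x, Projectivization.rep y} :
                Set (Fin (m+1) → ℂ))) = 2 := by
            rw [← sup_submodule_eq]
            exact finrank_sup_eq_two hxy
          have hxle : x.submodule ≤ Submodule.span ℂ
              ({Projectivization.rep x, Projectivization.rep y} : Set (Fin (m+1) → ℂ)) :=
            submodule_le_iff'.2 (Submodule.subset_span (Set.mem_insert _ _))
          have hyle : y.submodule ≤ Submodule.span ℂ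
              ({Projectivization.rep x, Projectivization.rep y} : Set (Fin (m+1) → ℂ)) :=
            submodule_le_iff'.2 (Submodule.subset_span (Set.mem_insert_of_mem _ rfl))
          have hple : p.submodule ≤ Submodule.span ℂ
              ({Projectivization.rep x, Projectivization.rep y} : Set (Fin (m+1) → ℂ)) :=
            submodule_le_iff'.2 hmem
          have he1 : p.submodule ⊔ x.submodule = Submodule.span ℂ
              ({Projectivization.rep x, Projectivization.rep y} : Set (Fin (m+1) → ℂ)) :=
            Submodule.eq_of_le_of_finrank_eq (sup_le hple hxle)
              (by rw [finrank_sup_eq_two hpx, hU2])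
          have he2 : p.submodule ⊔ y.submodule = Submodule.span ℂ
              ({Projectivization.rep x, Projectivization.rep y} : Set (Fin (m+1) → ℂ)) :=
            Submodule.eq_of_le_of_finrank_eq (sup_le hple hyle)
              (by rw [finrank_sup_eq_two hpy, hU2])
          exact hfxy (he1.trans he2.symm)
    have hABeq : A = B := by
      apply Finset.eq_of_subset_of_card_le ?_ (le_of_eq (hB.trans hA.symm))
      intro q hq
      by_contra hqB
      have hcq := hc0 q (hAZ hq)
      simp only [hc, if_pos hq, if_neg hqB, sub_zero] at hcq
      exact hαne q hq hcq
    exact hAB hABeq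


end
end

section
/- Let W be a finite set of points of ℙ^N, let S ⊆ W be a linearly independent subset, and let W' ⊆ W be a subset with W ∖ W' ⊆ S; write S_3 := W ∖ W'. If dim ⟨W⟩ = dim ⟨W'⟩ + #S_3 (projective dimensions of linear spans), then ⟨W'⟩ ∩ ⟨S⟩ = ⟨S ∩ W'⟩. In particular, any point lying in ⟨W'⟩ ∩ ⟨S⟩ lies in the span of the proper subset S ∩ W' of S. -/
open Module

noncomputable section

/-- The projective linear span of a set of points of `ℙ^N`, as the linear span in
`ℂ^{N+1}` of representative vectors of the points. -/
def projSpan (N : ℕ) (S : Set (Projectivization ℂ (Fin (N+1) → ℂ))) :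
    Submodule ℂ (Fin (N+1) → ℂ) :=
  Submodule.span ℂ (Projectivization.rep '' S)

/-- **Step (a) of the proof of the main theorem of Ballico–Bernardi** (Grassmann
formula argument).  Let `W ⊂ ℙ^N` be a finite set, `S ⊆ W` a linearly
independent subset and `W' ⊆ W` with `S₃ := W ∖ W' ⊆ S`.  If
`dim⟨W⟩ = dim⟨W'⟩ + #S₃` then `⟨W'⟩ ∩ ⟨S⟩ = ⟨S ∩ W'⟩`; in particular any point
of `⟨W'⟩ ∩ ⟨S⟩` lies in the span of the proper subset `S ∩ W'` of `S`. -/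
theorem span_inter_eq (N : ℕ) [DecidableEq (Projectivization ℂ (Fin (N+1) → ℂ))]
    (W S W' : Finset (Projectivization ℂ (Fin (N+1) → ℂ)))
    (hSW : S ⊆ W) (hW'W : W' ⊆ W) (hres : W \ W' ⊆ S)
    (hSind : finrank ℂ
      (projSpan N (S : Set (Projectivization ℂ (Fin (N+1) → ℂ)))) = S.card)
    (hdim : finrank ℂ (projSpan N (W : Set (Projectivization ℂ (Fin (N+1) → ℂ)))) =
      finrank ℂ (projSpan N (W' : Set (Projectivization ℂ (Fin (N+1) → ℂ)))) +
        (W \ W').card) :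
    projSpan N (W' : Set (Projectivization ℂ (Fin (N+1) → ℂ))) ⊓
      projSpan N (S : Set (Projectivization ℂ (Fin (N+1) → ℂ))) =
    projSpan N ((S ∩ W' : Finset (Projectivization ℂ (Fin (N+1) → ℂ))) :
      Set (Projectivization ℂ (Fin (N+1) → ℂ))) := by
  classical
  set A := projSpan N (W' : Set (Projectivization ℂ (Fin (N+1) → ℂ))) with hA
  set B := projSpan N ((W \ W' : Finset _) : Set (Projectivization ℂ (Fin (N+1) → ℂ))) with hB
  set C := projSpan N ((S ∩ W' : Finset _) : Set (Projectivization ℂ (Fin (N+1) → ℂ))) with hC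
  have projSpan_union : ∀ T₁ T₂ : Finset (Projectivization ℂ (Fin (N+1) → ℂ)),
      projSpan N ((T₁ ∪ T₂ : Finset _) : Set _) =
        projSpan N (T₁ : Set _) ⊔ projSpan N (T₂ : Set _) := by
    intro T₁ T₂
    simp [projSpan, Finset.coe_union, Set.image_union, Submodule.span_union]
  have projSpan_mono : ∀ T₁ T₂ : Finset (Projectivization ℂ (Fin (N+1) → ℂ)), T₁ ⊆ T₂ →
      projSpan N (T₁ : Set _) ≤ projSpan N (T₂ : Set _) := by
    intro T₁ T₂ h
    exact Submodule.span_mono (Set.image_mono (by exact_mod_cast h))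
  have hWsplit : W' ∪ (W \ W') = W := Finset.union_sdiff_of_subset hW'W
  have hSsplit : (S ∩ W') ∪ (W \ W') = S := by
    ext a
    simp only [Finset.mem_union, Finset.mem_inter, Finset.mem_sdiff]
    constructor
    · rintro (⟨h, _⟩ | h)
      · exact h
      · exact hres (Finset.mem_sdiff.2 h)
    · intro hS
      by_cases hW' : a ∈ W'
      · exact Or.inl ⟨hS, hW'⟩
      · exact Or.inr ⟨hSW hS, hW'⟩
  have hW : projSpan N (W : Set _) = A ⊔ B := by
    rw [← hWsplit, projSpan_union]
  have hS : projSpan N (S : Set _) = C ⊔ B := by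
    rw [← hSsplit, projSpan_union]
  -- finrank B ≤ #(W \ W')
  have hBle : finrank ℂ B ≤ (W \ W').card := by
    have h1 : finrank ℂ B ≤ ((W \ W').image Projectivization.rep).card := by
      have himg : (Projectivization.rep ''
          ((W \ W' : Finset (Projectivization ℂ (Fin (N+1) → ℂ))) :
            Set (Projectivization ℂ (Fin (N+1) → ℂ)))) =
          ((((W \ W').image Projectivization.rep : Finset (Fin (N+1) → ℂ))) :
            Set (Fin (N+1) → ℂ)) := by
        simp [Finset.coe_image]
      rw [hB, projSpan, himg]
      exact finrank_span_finset_le_card _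
    exact h1.trans (Finset.card_image_le)
  have hGrass := Submodule.finrank_sup_add_finrank_inf_eq A B
  rw [hW] at hdim
  have hinf0 : finrank ℂ ↥(A ⊓ B) = 0 := by omega
  have hinf : A ⊓ B = ⊥ := Submodule.finrank_eq_zero.1 hinf0
  rw [hS]
  apply le_antisymm
  · rintro x ⟨hxA, hxCB⟩
    obtain ⟨c, hc, b, hb, rfl⟩ := Submodule.mem_sup.1 hxCB
    have hCA : C ≤ A := projSpan_mono _ _ (Finset.inter_subset_right)
    have hcA : c ∈ A := hCA hc
    have hbA : b ∈ A := by
      have : (c + b) - c ∈ A := Submodule.sub_mem _ hxA hcA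
      simpa using this
    have hb0 : b = 0 := by
      have : b ∈ A ⊓ B := ⟨hbA, hb⟩
      rw [hinf] at this
      simpa using this
    simpa [hb0] using hc
  · exact le_inf (projSpan_mono _ _ (Finset.inter_subset_right)) le_sup_left

end
end
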